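/- arXiv:1311.3193 — 9 statements merged into one kernel-verified Lean document; each statement's English description precedes it below -/
import Mathlib

section
/- For any bounded set S of diameter d > 0 in a metric space and any positive integer k, the k-fold Borsuk number satisfies a_k(S) ≥ 2k. -/
open Set

/-- The `k`-fold Borsuk number of a set `S` in a metric space: the smallest
cardinality of a finite family of subsets of `S`, each of diameter strictly
less than `diam S`, covering every point of `S` at least `k` times
(`⊤` if no such finite family exists). -/
noncomputable def borsukNum {X : Type*} [MetricSpace X] (S : Set X) (k : ℕ) : ℕ∞ :=
  sInf {n : ℕ∞ | ∃ m : ℕ, n = (m : ℕ∞) ∧ ∃ F : Fin m → Set X,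
    (∀ i, F i ⊆ S ∧ Metric.diam (F i) < Metric.diam S) ∧
    ∀ x ∈ S, k ≤ {i : Fin m | x ∈ F i}.ncard}

theorem borsuk_ge_two_k {X : Type*} [MetricSpace X] (S : Set X)
    (hb : Bornology.IsBounded S) (hd : 0 < Metric.diam S)
    (k : ℕ) (hk : 0 < k) :
    (2 * k : ℕ∞) ≤ borsukNum S k := by
  apply le_sInf
  rintro n ⟨m, rfl, F, hF, hcov⟩
  -- S is nonempty
  have hSne : S.Nonempty := by
    rcases S.eq_empty_or_nonempty with h | h
    · rw [h, Metric.diam_empty] at hd; exact absurd hd (lt_irrefl 0)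
    · exact h
  -- m > 0
  have hm : 0 < m := by
    by_contra h
    push_neg at h
    interval_cases m
    obtain ⟨x, hx⟩ := hSne
    have := hcov x hx
    have : ({i : Fin 0 | x ∈ F i} : Set (Fin 0)).ncard = 0 := by
      have : ({i : Fin 0 | x ∈ F i} : Set (Fin 0)) = ∅ := by
        ext i; exact absurd i.2 (Nat.not_lt_zero i.1)
      rw [this, Set.ncard_empty]
    omega
  -- max of diameters
  have hne : (Finset.univ : Finset (Fin m)).Nonempty := by
    simpa [Finset.univ_nonempty_iff] using Fin.pos_iff_nonempty.mp hm
  set c := Finset.univ.sup' hne (fun i => Metric.diam (F i)) with hc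
  have hclt : c < Metric.diam S := by
    apply Finset.sup'_lt_iff hne |>.2
    intro i _
    exact (hF i).2
  have hc0 : 0 ≤ c := le_trans Metric.diam_nonneg
    (Finset.le_sup' (fun i => Metric.diam (F i)) (Finset.mem_univ hne.choose))
  -- find two far points
  have : ∃ x ∈ S, ∃ y ∈ S, c < dist x y := by
    by_contra h
    push_neg at h
    have := Metric.diam_le_of_forall_dist_le hc0 h
    exact absurd hclt (not_lt.2 this)
  obtain ⟨x, hx, y, hy, hxy⟩ := this
  -- no set contains both x and y
  have hdisj : Disjoint {i : Fin m | x ∈ F i} {i : Fin m | y ∈ F i} := by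
    rw [Set.disjoint_left]
    intro i hxi hyi
    have h1 : dist x y ≤ Metric.diam (F i) :=
      Metric.dist_le_diam_of_mem (hb.subset (hF i).1) hxi hyi
    have h2 : Metric.diam (F i) ≤ c :=
      Finset.le_sup' (fun i => Metric.diam (F i)) (Finset.mem_univ i)
    linarith
  have hkx := hcov x hx
  have hky := hcov y hy
  have hfinx : ({i : Fin m | x ∈ F i}).Finite := Set.toFinite _
  have hfiny : ({i : Fin m | y ∈ F i}).Finite := Set.toFinite _
  have hunion : ({i : Fin m | x ∈ F i} ∪ {i : Fin m | y ∈ F i}).ncard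
      = {i : Fin m | x ∈ F i}.ncard + {i : Fin m | y ∈ F i}.ncard :=
    Set.ncard_union_eq hdisj hfinx hfiny
  have hle : ({i : Fin m | x ∈ F i} ∪ {i : Fin m | y ∈ F i}).ncard ≤ m := by
    have := Set.ncard_le_ncard (Set.subset_univ
      ({i : Fin m | x ∈ F i} ∪ {i : Fin m | y ∈ F i})) (Set.finite_univ)
    simpa [Set.ncard_univ] using this
  have : 2 * k ≤ m := by omega
  exact_mod_cast Nat.cast_le.2 this
end

section
/- Let S be a bounded set of diameter d > 0 in a metric space. If the (1-fold) Borsuk number a(S) equals 2, then a_k(S) = 2k for every positive integer k. -/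
open Set

theorem borsuk_eq_two_k_of_eq_two {X : Type*} [MetricSpace X] (S : Set X)
    (hb : Bornology.IsBounded S) (hd : 0 < Metric.diam S)
    (ha : borsukNum S 1 = 2)
    (k : ℕ) (hk : 0 < k) :
    borsukNum S k = (2 * k : ℕ∞) := by
  -- S is nonempty
  have hSne : S.Nonempty := by
    rcases S.eq_empty_or_nonempty with h | h
    · rw [h, Metric.diam_empty] at hd; exact absurd hd (lt_irrefl 0)
    · exact h
  apply le_antisymm
  · -- upper bound: extract a 2-family from ha and repeat k times
    have hne : ({n : ℕ∞ | ∃ m : ℕ, n = (m : ℕ∞) ∧ ∃ F : Fin m → Set X,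
        (∀ i, F i ⊆ S ∧ Metric.diam (F i) < Metric.diam S) ∧
        ∀ x ∈ S, 1 ≤ {i : Fin m | x ∈ F i}.ncard}).Nonempty := by
      by_contra h
      rw [Set.not_nonempty_iff_eq_empty] at h
      rw [borsukNum, h, sInf_empty] at ha
      exact (by decide : (⊤ : ℕ∞) ≠ 2) ha
    have hmem := csInf_mem hne
    rw [borsukNum] at ha
    rw [ha] at hmem
    obtain ⟨m, hm2, F, hF, hcov⟩ := hmem
    have hm : m = 2 := by exact_mod_cast hm2.symm
    subst hm
    -- build family on Fin (2 * k)
    set e := finProdFinEquiv (m := 2) (n := k) with he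
    apply sInf_le
    refine ⟨2 * k, rfl, fun i => F (e.symm i).1, fun i => hF _, ?_⟩
    intro x hx
    obtain ⟨j, hj⟩ : ∃ j, x ∈ F j := by
      have h1 := hcov x hx
      have h2 : ({i : Fin 2 | x ∈ F i}).Nonempty :=
        Set.nonempty_of_ncard_ne_zero (by omega)
      obtain ⟨j, hj⟩ := h2
      exact ⟨j, hj⟩
    have hinj : Function.Injective (fun t : Fin k => e (j, t)) := by
      intro a b hab
      have := e.injective hab
      exact (Prod.mk.injEq _ _ _ _).mp this |>.2
    have hsub : Set.range (fun t : Fin k => e (j, t)) ⊆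
        {i : Fin (2 * k) | x ∈ F (e.symm i).1} := by
      rintro i ⟨t, rfl⟩
      simp only [Set.mem_setOf_eq, Equiv.symm_apply_apply]
      exact hj
    calc k = (Set.range (fun t : Fin k => e (j, t))).ncard := by
              rw [← Set.image_univ, Set.ncard_image_of_injective _ hinj,
                Set.ncard_univ]
              simp [Nat.card_eq_fintype_card]
           _ ≤ _ := Set.ncard_le_ncard hsub (Set.toFinite _)
  · -- lower bound: any admissible family has ≥ 2k sets
    rw [borsukNum]
    apply le_sInf
    rintro n ⟨m, rfl, F, hF, hcov⟩
    suffices h : 2 * k ≤ m by exact_mod_cast h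
    -- m ≥ 1
    obtain ⟨x0, hx0⟩ := hSne
    have hm0 : 0 < m := by
      by_contra h
      push_neg at h
      interval_cases m
      have := hcov x0 hx0
      have : ({i : Fin 0 | x0 ∈ F i}).ncard = 0 := by
        have : ({i : Fin 0 | x0 ∈ F i}) = ∅ :=
          Set.eq_empty_of_isEmpty _
        rw [this, Set.ncard_empty]
      omega
    have hfne : (Finset.univ : Finset (Fin m)).Nonempty := by
      exact Finset.univ_nonempty_iff.mpr (Fin.pos_iff_nonempty.mp hm0)
    set c := Finset.univ.sup' hfne (fun i => Metric.diam (F i)) with hc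
    have hclt : c < Metric.diam S := by
      rw [hc, Finset.sup'_lt_iff]
      intro i _
      exact (hF i).2
    -- find x y in S with dist > c
    have : ∃ x ∈ S, ∃ y ∈ S, c < dist x y := by
      by_contra h
      push_neg at h
      have hc0 : 0 ≤ c := by
        obtain ⟨i⟩ := Fin.pos_iff_nonempty.mp hm0
        exact le_trans Metric.diam_nonneg
          (Finset.le_sup' (fun i => Metric.diam (F i)) (Finset.mem_univ i))
      have := Metric.diam_le_of_forall_dist_le hc0 h
      exact absurd (lt_of_lt_of_le hclt this) (lt_irrefl _)
    obtain ⟨x, hx, y, hy, hxy⟩ := this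
    have hdisj : Disjoint {i : Fin m | x ∈ F i} {i : Fin m | y ∈ F i} := by
      rw [Set.disjoint_left]
      intro i hxi hyi
      have hle : dist x y ≤ Metric.diam (F i) :=
        Metric.dist_le_diam_of_mem ((hb.subset (hF i).1)) hxi hyi
      have : Metric.diam (F i) ≤ c :=
        Finset.le_sup' (fun i => Metric.diam (F i)) (Finset.mem_univ i)
      linarith
    have h1 := hcov x hx
    have h2 := hcov y hy
    have hun : ({i : Fin m | x ∈ F i} ∪ {i : Fin m | y ∈ F i}).ncard =
        {i : Fin m | x ∈ F i}.ncard + {i : Fin m | y ∈ F i}.ncard :=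
      Set.ncard_union_eq hdisj (Set.toFinite _) (Set.toFinite _)
    have hle : ({i : Fin m | x ∈ F i} ∪ {i : Fin m | y ∈ F i}).ncard ≤ m := by
      have := Set.ncard_le_ncard (Set.subset_univ
        ({i : Fin m | x ∈ F i} ∪ {i : Fin m | y ∈ F i})) (Set.toFinite _)
      simpa [Set.ncard_univ, Nat.card_eq_fintype_card] using this
    omega
end

section
/- Let S be a bounded set of diameter d > 0 in a metric space. If a(S) > 2, then a_k(S) > 2k for every positive integer k. -/
open Set

theorem borsuk_gt_two_k_of_gt_two {X : Type*} [MetricSpace X] (S : Set X)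
    (hb : Bornology.IsBounded S) (hd : 0 < Metric.diam S)
    (ha : 2 < borsukNum S 1)
    (k : ℕ) (hk : 0 < k) :
    (2 * k : ℕ∞) < borsukNum S k := by
  by_contra hcon
  push_neg at hcon
  have h2 : borsukNum S k < (2 * k : ℕ∞) + 1 :=
    lt_of_le_of_lt hcon ((ENat.lt_add_one_iff (by exact_mod_cast ENat.coe_ne_top (2*k))).mpr le_rfl)
  rw [borsukNum, sInf_lt_iff] at h2
  obtain ⟨a, haT, halt⟩ := h2
  obtain ⟨m, rfl, F, hF, hcov⟩ := haT
  have hm : m ≤ 2 * k := by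
    have : (m : ℕ∞) < ((2 * k + 1 : ℕ) : ℕ∞) := by
      simpa [Nat.cast_add, Nat.cast_mul] using halt
    exact Nat.lt_succ_iff.mp (by exact_mod_cast this)
  -- S is nonempty
  have hS : S.Nonempty := by
    rcases S.eq_empty_or_nonempty with h | h
    · rw [h, Metric.diam_empty] at hd; exact absurd hd (lt_irrefl 0)
    · exact h
  obtain ⟨x₀, hx₀⟩ := hS
  have hcov₀ := hcov x₀ hx₀
  have hne : {i : Fin m | x₀ ∈ F i}.Nonempty := by
    apply Set.nonempty_of_ncard_ne_zero
    omega
  obtain ⟨j, hj⟩ := hne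
  haveI : Nonempty (Fin m) := ⟨j⟩
  set d := Metric.diam S with hdd
  set M := Finset.univ.sup' Finset.univ_nonempty (fun i => Metric.diam (F i)) with hM
  have hM0 : 0 ≤ M :=
    le_trans Metric.diam_nonneg (Finset.le_sup' (fun i => Metric.diam (F i)) (Finset.mem_univ j))
  have hMd : M < d := by
    rw [hM, Finset.sup'_lt_iff]
    intro i _
    exact (hF i).2
  -- key: two points outside F j share a common set
  have key : ∀ x ∈ S \ F j, ∀ y ∈ S \ F j, dist x y ≤ M := by
    rintro x ⟨hxS, hxj⟩ y ⟨hyS, hyj⟩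
    have hxc := hcov x hxS
    have hyc := hcov y hyS
    set A := {i : Fin m | x ∈ F i} with hA
    set B := {i : Fin m | y ∈ F i} with hB
    have hfinA : A.Finite := Set.toFinite A
    have hfinB : B.Finite := Set.toFinite B
    by_cases hint : (A ∩ B).Nonempty
    · obtain ⟨i, hiA, hiB⟩ := hint
      calc dist x y ≤ Metric.diam (F i) :=
            Metric.dist_le_diam_of_mem (hb.subset (hF i).1) hiA hiB
        _ ≤ M := Finset.le_sup' (fun i => Metric.diam (F i)) (Finset.mem_univ i)
    · exfalso
      rw [Set.not_nonempty_iff_eq_empty] at hint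
      have hdisj : Disjoint A B := Set.disjoint_iff_inter_eq_empty.mpr hint
      have hjAB : j ∉ A ∪ B := by
        rintro (h | h) <;> [exact hxj h; exact hyj h]
      have hcard : (insert j (A ∪ B)).ncard = A.ncard + B.ncard + 1 := by
        rw [Set.ncard_insert_of_notMem hjAB (hfinA.union hfinB),
          Set.ncard_union_eq hdisj hfinA hfinB]
      have hle : (insert j (A ∪ B)).ncard ≤ m := by
        have := Set.ncard_le_ncard (Set.subset_univ (insert j (A ∪ B)))
          (Set.finite_univ)
        simpa [Set.ncard_univ] using this
      omega
  -- build a 1-fold cover by 2 sets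
  have hmem : (2 : ℕ∞) ∈ {n : ℕ∞ | ∃ m : ℕ, n = (m : ℕ∞) ∧ ∃ F : Fin m → Set X,
      (∀ i, F i ⊆ S ∧ Metric.diam (F i) < Metric.diam S) ∧
      ∀ x ∈ S, 1 ≤ {i : Fin m | x ∈ F i}.ncard} := by
    refine ⟨2, by norm_num, ![F j, S \ F j], ?_, ?_⟩
    · intro i
      fin_cases i
      · simpa using ⟨(hF j).1, (hF j).2⟩
      · refine ⟨?_, ?_⟩
        · simp [Set.diff_subset]
        · simp only [Matrix.cons_val_one, Matrix.head_cons]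
          exact lt_of_le_of_lt (Metric.diam_le_of_forall_dist_le hM0
            (fun x hx y hy => key x hx y hy)) hMd
    · intro x hx
      have : {i : Fin 2 | x ∈ ![F j, S \ F j] i}.Nonempty := by
        by_cases hxj : x ∈ F j
        · exact ⟨0, by simpa using hxj⟩
        · exact ⟨1, by simp [hx, hxj]⟩
      have hfin : {i : Fin 2 | x ∈ ![F j, S \ F j] i}.Finite := Set.toFinite _
      have := (Set.ncard_pos hfin).mpr this
      omega
  have hle2 : borsukNum S 1 ≤ 2 := sInf_le hmem
  exact absurd (lt_of_lt_of_le ha hle2) (lt_irrefl 2)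
end

section
/- Let S be a closed bounded set of positive diameter in a finite-dimensional real normed space. Then for every positive integer k, a_k(S) = a_k(∂S), where ∂S denotes the topological boundary (frontier) of S. -/
open Set

/-- Exit lemma: from a point `y` with `y + v ∈ S` (`v ≠ 0`), the ray `y + t • v`
hits the frontier of `S` at some `t ≥ 1`. -/
lemma exit_frontier {E : Type*} [NormedAddCommGroup E] [NormedSpace ℝ E]
    {S : Set E} (hcl : IsClosed S) (hb : Bornology.IsBounded S)
    {y v : E} (hv : v ≠ 0) (hy : y + v ∈ S) :
    ∃ t : ℝ, 1 ≤ t ∧ y + t • v ∈ frontier S := by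
  set T : Set ℝ := {t : ℝ | 1 ≤ t ∧ y + t • v ∈ S} with hT
  have hT1 : (1:ℝ) ∈ T := ⟨le_refl 1, by simpa using hy⟩
  have hTne : T.Nonempty := ⟨1, hT1⟩
  obtain ⟨C, hC⟩ := hb.subset_closedBall 0
  have hbdd : BddAbove T := by
    refine ⟨(C + ‖y‖) / ‖v‖, fun t ht => ?_⟩
    have h1 : ‖y + t • v‖ ≤ C := by simpa using hC ht.2
    have h2 : t * ‖v‖ ≤ C + ‖y‖ := by
      have : ‖t • v‖ = ‖(y + t • v) - y‖ := by rw [add_sub_cancel_left]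
      have h3 : ‖t • v‖ ≤ C + ‖y‖ := by
        rw [this]
        calc ‖(y + t • v) - y‖ ≤ ‖y + t • v‖ + ‖y‖ := norm_sub_le _ _
          _ ≤ C + ‖y‖ := by linarith
      have h4 : ‖t • v‖ = |t| * ‖v‖ := norm_smul t v
      have h5 : |t| = t := abs_of_pos (lt_of_lt_of_le zero_lt_one ht.1)
      rw [h4, h5] at h3; exact h3
    rw [le_div_iff₀ (norm_pos_iff.mpr hv)]
    exact h2
  have hTcl : IsClosed T := by
    have : T = Ici (1:ℝ) ∩ (fun t : ℝ => y + t • v) ⁻¹' S := by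
      ext t; simp [hT, Ici]
    rw [this]
    exact isClosed_Ici.inter (hcl.preimage (by fun_prop))
  set t₀ := sSup T with ht₀
  have ht₀T : t₀ ∈ T := hTcl.csSup_mem hTne hbdd
  refine ⟨t₀, ht₀T.1, ?_⟩
  rw [← closure_diff_interior, Set.mem_diff]
  refine ⟨subset_closure ht₀T.2, fun hint => ?_⟩
  obtain ⟨ε, hε, hball⟩ := Metric.isOpen_iff.mp isOpen_interior _ hint
  have hvpos : (0:ℝ) < ‖v‖ := norm_pos_iff.mpr hv
  set δ := ε / (2 * ‖v‖) with hδ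
  have hδpos : 0 < δ := by positivity
  have hmem : y + (t₀ + δ) • v ∈ S := by
    apply interior_subset
    apply hball
    have : dist (y + (t₀ + δ) • v) (y + t₀ • v) = δ * ‖v‖ := by
      rw [dist_eq_norm]
      have : (y + (t₀ + δ) • v) - (y + t₀ • v) = δ • v := by
        rw [add_smul]; abel
      rw [this, norm_smul, Real.norm_eq_abs, abs_of_pos hδpos]
    rw [Metric.mem_ball, this, hδ]
    rw [div_mul_eq_mul_div, mul_comm]
    rw [div_lt_iff₀ (by positivity)]
    nlinarith
  have : t₀ + δ ≤ t₀ := le_csSup hbdd ⟨by linarith [ht₀T.1], hmem⟩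
  linarith

/-- The frontier of a closed bounded set has the same diameter. -/
lemma diam_frontier_eq {E : Type*} [NormedAddCommGroup E] [NormedSpace ℝ E]
    {S : Set E} (hcl : IsClosed S) (hb : Bornology.IsBounded S) :
    Metric.diam (frontier S) = Metric.diam S := by
  have hfb : Bornology.IsBounded (frontier S) := hb.subset hcl.frontier_subset
  refine le_antisymm (Metric.diam_mono hcl.frontier_subset hb) ?_
  apply Metric.diam_le_of_forall_dist_le Metric.diam_nonneg
  intro x hx y hy
  by_cases hxy : x = y
  · simp [hxy, Metric.diam_nonneg]
  · have hv : x - y ≠ 0 := sub_ne_zero.mpr hxy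
    have hx' : y + (x - y) ∈ S := by rw [add_sub_cancel]; exact hx
    obtain ⟨t, ht1, hz⟩ := exit_frontier hcl hb hv hx'
    set z := y + t • (x - y) with hzdef
    have hu : y - z ≠ 0 := by
      rw [hzdef]
      intro h
      apply hv
      have : t • (x - y) = 0 := by
        have := congrArg (fun w => w + t • (x - y)) h
        simpa using this.symm
      rcases smul_eq_zero.mp this with h' | h'
      · linarith
      · exact h'
    have hy' : z + (y - z) ∈ S := by simpa using hy
    obtain ⟨s, hs1, hw⟩ := exit_frontier hcl hb hu hy'
    set w := z + s • (y - z) with hwdef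
    have key : dist x y ≤ dist z w := by
      rw [dist_eq_norm, dist_eq_norm]
      have h3 : z - w = (s * t) • (x - y) := by
        rw [hwdef, hzdef]; module
      rw [h3, norm_smul, Real.norm_eq_abs, abs_of_pos (by nlinarith)]
      have hst : 1 ≤ s * t := by nlinarith
      nlinarith [norm_nonneg (x - y)]
    exact key.trans (Metric.dist_le_diam_of_mem hfb hz hw)

/-- From an interior point `c` of a compact set `S`, all points of `S` are
within some radius `R` strictly smaller than the diameter. -/
lemma exists_radius {E : Type*} [NormedAddCommGroup E] [NormedSpace ℝ E]
    [FiniteDimensional ℝ E] {S : Set E} (hcl : IsClosed S) (hb : Bornology.IsBounded S)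
    (hd : 0 < Metric.diam S) {c : E} (hc : c ∈ interior S) :
    ∃ R : ℝ, 0 ≤ R ∧ R < Metric.diam S ∧ ∀ z ∈ S, ‖z - c‖ ≤ R := by
  have hcS : c ∈ S := interior_subset hc
  have hcomp : IsCompact S := Metric.isCompact_of_isClosed_isBounded hcl hb
  have hne : S.Nonempty := ⟨c, hcS⟩
  obtain ⟨z₀, hz₀S, hmax⟩ := hcomp.exists_isMaxOn hne
    (f := fun z => ‖z - c‖) (by fun_prop)
  refine ⟨‖z₀ - c‖, norm_nonneg _, ?_, fun z hz => hmax hz⟩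
  obtain ⟨ε, hε, hball⟩ := Metric.isOpen_iff.mp isOpen_interior _ hc
  by_cases h0 : z₀ = c
  · simpa [h0] using hd
  · set R := ‖z₀ - c‖ with hR
    have hRpos : 0 < R := norm_pos_iff.mpr (sub_ne_zero.mpr h0)
    set c' := c - (ε / (2 * R)) • (z₀ - c) with hc'
    have hc'S : c' ∈ S := by
      apply interior_subset; apply hball
      rw [Metric.mem_ball, dist_eq_norm, hc']
      have : c - (ε / (2 * R)) • (z₀ - c) - c = -((ε / (2 * R)) • (z₀ - c)) := by abel
      rw [this, norm_neg, norm_smul, Real.norm_eq_abs, abs_of_pos (by positivity), hR]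
      rw [div_mul_eq_mul_div, mul_comm]
      rw [div_lt_iff₀ (by positivity)]
      nlinarith
    have hdist : dist z₀ c' = R + ε / 2 := by
      rw [dist_eq_norm, hc']
      have : z₀ - (c - (ε / (2 * R)) • (z₀ - c)) = (1 + ε / (2 * R)) • (z₀ - c) := by
        rw [add_smul, one_smul]; abel
      rw [this, norm_smul, Real.norm_eq_abs, abs_of_pos (by positivity), ← hR]
      field_simp
    have := Metric.dist_le_diam_of_mem hb hz₀S hc'S
    rw [hdist] at this
    linarith

/-- Cone diameter bound: two points on segments from apex `c` to points `z, w`. -/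
lemma cone_bound_aux {E : Type*} [NormedAddCommGroup E] [NormedSpace ℝ E]
    {c z w : E} {s t : ℝ} (hs0 : 0 ≤ s) (hs1 : s ≤ 1) (ht0 : 0 ≤ t) (hts : t ≤ s)
    {R D : ℝ} (hz : ‖z - c‖ ≤ R) (hzw : ‖z - w‖ ≤ D) :
    ‖(c + s • (z - c)) - (c + t • (w - c))‖ ≤ max R D := by
  have hR0 : 0 ≤ R := le_trans (norm_nonneg _) hz
  have hD0 : 0 ≤ D := le_trans (norm_nonneg _) hzw
  have heq : (c + s • (z - c)) - (c + t • (w - c))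
      = t • (z - w) + (s - t) • (z - c) := by
    module
  rw [heq]
  calc ‖t • (z - w) + (s - t) • (z - c)‖
      ≤ ‖t • (z - w)‖ + ‖(s - t) • (z - c)‖ := norm_add_le _ _
    _ = t * ‖z - w‖ + (s - t) * ‖z - c‖ := by
        rw [norm_smul, norm_smul, Real.norm_eq_abs, Real.norm_eq_abs,
          abs_of_nonneg ht0, abs_of_nonneg (by linarith : (0:ℝ) ≤ s - t)]
    _ ≤ t * max R D + (s - t) * max R D := by
        have h1 : ‖z - w‖ ≤ max R D := hzw.trans (le_max_right _ _)
        have h2 : ‖z - c‖ ≤ max R D := hz.trans (le_max_left _ _)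
        have := le_max_left R D
        nlinarith
    _ = s * max R D := by ring
    _ ≤ 1 * max R D := by nlinarith [le_max_left R D]
    _ = max R D := one_mul _

theorem borsuk_eq_borsuk_frontier {E : Type*} [NormedAddCommGroup E] [NormedSpace ℝ E]
    [FiniteDimensional ℝ E] (S : Set E)
    (hcl : IsClosed S) (hb : Bornology.IsBounded S) (hd : 0 < Metric.diam S)
    (k : ℕ) (hk : 0 < k) :
    borsukNum S k = borsukNum (frontier S) k := by
  have hdiam : Metric.diam (frontier S) = Metric.diam S := diam_frontier_eq hcl hb
  rcases eq_empty_or_nonempty (interior S) with hint | ⟨c, hc⟩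
  · have hfr : frontier S = S := by rw [hcl.frontier_eq, hint, diff_empty]
    rw [hfr]
  · have hcS : c ∈ S := interior_subset hc
    have hfrsub : frontier S ⊆ S := hcl.frontier_subset
    obtain ⟨R, hR0, hRlt, hRbound⟩ := exists_radius hcl hb hd hc
    apply le_antisymm
    · -- borsukNum S ≤ borsukNum (frontier S) : extend a frontier family to S
      apply sInf_le_sInf
      rintro n ⟨m, rfl, F, hF, hcov⟩
      -- frontier S is nonempty
      obtain ⟨x₀, hx₀S, hx₀ne⟩ : ∃ x₀ ∈ S, x₀ ≠ c := by
        by_contra h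
        push_neg at h
        have : S ⊆ {c} := fun x hx => h x hx
        have : Metric.diam S ≤ 0 := by
          calc Metric.diam S ≤ Metric.diam {c} := Metric.diam_mono this (by simp)
            _ = 0 := Metric.diam_singleton
        linarith
      have hx₀' : c + (x₀ - c) ∈ S := by rw [add_sub_cancel]; exact hx₀S
      obtain ⟨t₀, ht₀1, hz₀⟩ := exit_frontier hcl hb (sub_ne_zero.mpr hx₀ne) hx₀'
      set z₀ := c + t₀ • (x₀ - c) with hz₀def
      have hkm : k ≤ m := by
        calc k ≤ {i : Fin m | z₀ ∈ F i}.ncard := hcov z₀ hz₀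
          _ ≤ (univ : Set (Fin m)).ncard := Set.ncard_le_ncard (subset_univ _) (toFinite _)
          _ = m := by rw [Set.ncard_univ]; simp
      refine ⟨m, rfl, fun i => insert c {x | x ∈ S ∧ ∃ t ∈ Icc (0:ℝ) 1, ∃ z ∈ F i,
        x = c + t • (z - c)}, fun i => ⟨?_, ?_⟩, ?_⟩
      · rintro x (rfl | ⟨hxS, _⟩)
        · exact hcS
        · exact hxS
      · -- diameter bound
        have hDi : Metric.diam (F i) < Metric.diam S := by
          rw [← hdiam]; exact (hF i).2
        have hFib : Bornology.IsBounded (F i) := hb.subset ((hF i).1.trans hfrsub)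
        have key : ∀ p ∈ insert c {x | x ∈ S ∧ ∃ t ∈ Icc (0:ℝ) 1, ∃ z ∈ F i,
            x = c + t • (z - c)}, ∀ q ∈ insert c {x | x ∈ S ∧ ∃ t ∈ Icc (0:ℝ) 1,
            ∃ z ∈ F i, x = c + t • (z - c)}, dist p q ≤ max R (Metric.diam (F i)) := by
          have hcform : ∀ p, p = c ∨ (p ∈ S ∧ ∃ t ∈ Icc (0:ℝ) 1, ∃ z ∈ F i,
              p = c + t • (z - c)) → p = c ∨ ∃ t : ℝ, (0 ≤ t ∧ t ≤ 1) ∧ ∃ z ∈ F i,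
              ‖z - c‖ ≤ R ∧ p = c + t • (z - c) := by
            rintro p (rfl | ⟨hpS, t, ⟨ht0, ht1⟩, z, hzF, rfl⟩)
            · exact Or.inl rfl
            · exact Or.inr ⟨t, ⟨ht0, ht1⟩, z, hzF,
                hRbound z (hfrsub ((hF i).1 hzF)), rfl⟩
          intro p hp q hq
          have hp' := hcform p (mem_insert_iff.mp hp)
          have hq' := hcform q (mem_insert_iff.mp hq)
          have hmax0 : (0:ℝ) ≤ max R (Metric.diam (F i)) :=
            le_max_of_le_left hR0
          -- helper for center-to-cone distances
          have hcpt : ∀ t : ℝ, 0 ≤ t → t ≤ 1 → ∀ z, ‖z - c‖ ≤ R →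
              dist c (c + t • (z - c)) ≤ max R (Metric.diam (F i)) := by
            intro t ht0 ht1 z hzR
            rw [dist_eq_norm]
            have : c - (c + t • (z - c)) = -(t • (z - c)) := by abel
            rw [this, norm_neg, norm_smul, Real.norm_eq_abs, abs_of_nonneg ht0]
            calc t * ‖z - c‖ ≤ 1 * R := by nlinarith [norm_nonneg (z - c)]
              _ = R := one_mul R
              _ ≤ max R (Metric.diam (F i)) := le_max_left _ _
          rcases hp' with rfl | ⟨t, ⟨ht0, ht1⟩, z, hzF, hzR, rfl⟩
          · rcases hq' with rfl | ⟨t, ⟨ht0, ht1⟩, z, hzF, hzR, rfl⟩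
            · simpa using hmax0
            · exact hcpt t ht0 ht1 z hzR
          · rcases hq' with rfl | ⟨t', ⟨ht'0, ht'1⟩, z', hz'F, hz'R, rfl⟩
            · rw [dist_comm]; exact hcpt t ht0 ht1 z hzR
            · have hzw : dist z z' ≤ Metric.diam (F i) :=
                Metric.dist_le_diam_of_mem hFib hzF hz'F
              rw [dist_eq_norm] at hzw ⊢
              rcases le_total t' t with h | h
              · exact cone_bound_aux ht0 ht1 ht'0 h hzR hzw
              · rw [norm_sub_rev]
                have : max R (Metric.diam (F i)) = max R (Metric.diam (F i)) := rfl
                have hzw' : ‖z' - z‖ ≤ Metric.diam (F i) := by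
                  rw [norm_sub_rev]; exact hzw
                exact cone_bound_aux ht'0 ht'1 ht0 h hz'R hzw'
        calc Metric.diam _ ≤ max R (Metric.diam (F i)) :=
              Metric.diam_le_of_forall_dist_le (le_max_of_le_left hR0) key
          _ < Metric.diam S := max_lt hRlt (by rw [← hdiam]; exact (hF i).2)
      · -- coverage
        intro x hxS
        by_cases hxc : x = c
        · subst hxc
          have : {i : Fin m | x ∈ insert x {y | y ∈ S ∧ ∃ t ∈ Icc (0:ℝ) 1,
              ∃ z ∈ F i, y = x + t • (z - x)}} = univ := by
            ext i; simp
          rw [this, Set.ncard_univ]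
          simpa using hkm
        · have hx' : c + (x - c) ∈ S := by rw [add_sub_cancel]; exact hxS
          obtain ⟨t, ht1, hzfr⟩ := exit_frontier hcl hb (sub_ne_zero.mpr hxc) hx'
          set z := c + t • (x - c) with hzdef
          have htpos : (0:ℝ) < t := lt_of_lt_of_le zero_lt_one ht1
          have hxz : x = c + (1/t) • (z - c) := by
            rw [hzdef]
            have : (c + t • (x - c)) - c = t • (x - c) := by abel
            rw [this, smul_smul, one_div_mul_cancel (ne_of_gt htpos), one_smul]
            abel
          have hsub : {i : Fin m | z ∈ F i} ⊆ {i : Fin m | x ∈ insert c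
              {y | y ∈ S ∧ ∃ t ∈ Icc (0:ℝ) 1, ∃ w ∈ F i, y = c + t • (w - c)}} := by
            intro i hi
            exact mem_insert_iff.mpr (Or.inr ⟨hxS, 1/t, ⟨by positivity, by
              rw [div_le_one htpos]; exact ht1⟩, z, hi, hxz⟩)
          calc k ≤ {i : Fin m | z ∈ F i}.ncard := hcov z hzfr
            _ ≤ _ := Set.ncard_le_ncard hsub (toFinite _)
    · -- borsukNum (frontier S) ≤ borsukNum S : restrict a family for S
      apply sInf_le_sInf
      rintro n ⟨m, rfl, F, hF, hcov⟩
      refine ⟨m, rfl, fun i => F i ∩ frontier S, fun i => ⟨inter_subset_right, ?_⟩, ?_⟩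
      · calc Metric.diam (F i ∩ frontier S) ≤ Metric.diam (F i) :=
              Metric.diam_mono inter_subset_left (hb.subset (hF i).1)
          _ < Metric.diam S := (hF i).2
          _ = Metric.diam (frontier S) := hdiam.symm
      · intro x hx
        have : {i : Fin m | x ∈ F i ∩ frontier S} = {i : Fin m | x ∈ F i} := by
          ext i; simp [hx]
        rw [this]
        exact hcov x (hfrsub hx)
end

section
/- The Lens Cutting Condition (LCC) holds in Euclidean space ℝ^n: for any two distinct points u, v ∈ ℝ^n with |u − v| ≤ 1, any point x in the intersection of the unit spheres centered at u and v, and any ε > 0, there exists w ∈ ℝ^n such that x is not in the closed unit ball B(w) centered at w, but B(w) contains (B(u) ∩ B(v)) \ B(x, ε), where B(x, ε) is the open ball of radius ε around x. -/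
open Set Metric

lemma lcc_arith (h c : ℝ) (hh0 : 0 < h) (hh1 : h < 1) (hc0 : 0 < c) (hc1 : c ≤ 1) :
    ∃ s : ℝ, 1 - h < s ∧ 0 < s ∧ h ^ 2 + 2 * s * (h - c) + s ^ 2 ≤ 1 := by
  have hp : 0 < c * (1 - h) := mul_pos hc0 (by linarith)
  have hp1 : c * (1 - h) ≤ 1 := by nlinarith
  refine ⟨(1 - h) + (2 / 3) * (c * (1 - h)), by linarith, by linarith, ?_⟩
  nlinarith [mul_nonneg hp.le
    (show (0:ℝ) ≤ 2 * c + 1 - (2 / 3) * (c * (1 - h)) by nlinarith)]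

set_option maxHeartbeats 1000000 in
/-- The Lens Cutting Condition (LCC) holds in Euclidean space. -/
theorem lcc_euclidean (n : ℕ) (u v x : EuclideanSpace ℝ (Fin n))
    (huv : u ≠ v) (hd : dist u v ≤ 1)
    (hxu : x ∈ sphere u 1) (hxv : x ∈ sphere v 1)
    (ε : ℝ) (hε : 0 < ε) :
    ∃ w : EuclideanSpace ℝ (Fin n), x ∉ closedBall w 1 ∧
      (closedBall u 1 ∩ closedBall v 1) \ ball x ε ⊆ closedBall w 1 := by
  obtain ⟨m, hm⟩ : ∃ m : EuclideanSpace ℝ (Fin n), m = (2⁻¹ : ℝ) • (u + v) := ⟨_, rfl⟩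
  obtain ⟨d, hdm⟩ : ∃ d : EuclideanSpace ℝ (Fin n), d = x - m := ⟨_, rfl⟩
  obtain ⟨a, ha⟩ : ∃ a : ℝ, a = ‖u - v‖ := ⟨_, rfl⟩
  have ha0 : 0 < a := ha ▸ norm_pos_iff.mpr (sub_ne_zero.mpr huv)
  have ha1 : a ≤ 1 := by rw [ha]; rwa [dist_eq_norm] at hd
  have key : ∀ y : EuclideanSpace ℝ (Fin n),
      ‖y - u‖ ^ 2 + ‖y - v‖ ^ 2 = 2 * ‖y - m‖ ^ 2 + a ^ 2 / 2 := by
    intro y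
    have hpar := parallelogram_law_with_norm ℝ (y - u) (y - v)
    have h1 : y - u + (y - v) = (2 : ℝ) • (y - m) := by rw [hm]; module
    have h2 : y - u - (y - v) = v - u := by abel
    rw [h1, h2] at hpar
    have h3 : ‖(2 : ℝ) • (y - m)‖ = 2 * ‖y - m‖ := by
      rw [norm_smul]; simp
    have h4 : ‖v - u‖ = a := by rw [ha, norm_sub_rev]
    rw [h3, h4] at hpar
    nlinarith [hpar]
  obtain ⟨h, hh⟩ : ∃ h : ℝ, h = ‖d‖ := ⟨_, rfl⟩
  have hxu1 : ‖x - u‖ = 1 := by rwa [mem_sphere, dist_eq_norm] at hxu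
  have hxv1 : ‖x - v‖ = 1 := by rwa [mem_sphere, dist_eq_norm] at hxv
  have hh2 : h ^ 2 = 1 - a ^ 2 / 4 := by
    have hx := key x
    rw [hxu1, hxv1, ← hdm, ← hh] at hx
    nlinarith [hx]
  have hhn : 0 ≤ h := hh ▸ norm_nonneg d
  have hh0 : 0 < h := by nlinarith
  have hh1 : h < 1 := by nlinarith
  obtain ⟨c, hc0, hc1, hcε⟩ : ∃ c : ℝ, 0 < c ∧ c ≤ 1 ∧ c ≤ ε ^ 2 / 2 :=
    ⟨min (ε ^ 2 / 2) 1, lt_min (by positivity) one_pos, min_le_right _ _, min_le_left _ _⟩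
  obtain ⟨s, hs1, hs0, hineq⟩ := lcc_arith h c hh0 hh1 hc0 hc1
  refine ⟨m - (s / h) • d, ?_, ?_⟩
  · -- x is outside the new ball
    have hxw : x - (m - (s / h) • d) = (1 + s / h) • d := by
      rw [hdm]; module
    have hnorm : dist x (m - (s / h) • d) = h + s := by
      rw [dist_eq_norm, hxw, norm_smul]
      have h5 : |1 + s / h| = 1 + s / h := abs_of_pos (by positivity)
      rw [Real.norm_eq_abs, h5, ← hh]
      field_simp
    simp only [mem_closedBall, hnorm]
    push_neg
    linarith
  · rintro y ⟨⟨hyu, hyv⟩, hyx⟩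
    rw [mem_closedBall, dist_eq_norm] at hyu hyv ⊢
    obtain ⟨t, ht⟩ : ∃ t : ℝ, t = (inner ℝ (y - m) d : ℝ) := ⟨_, rfl⟩
    have hy2 : ‖y - m‖ ^ 2 ≤ h ^ 2 := by
      have hk := key y
      nlinarith [hk, norm_nonneg (y - u), norm_nonneg (y - v)]
    have hyxε : ε ≤ ‖y - x‖ := by
      rw [mem_ball, dist_eq_norm, not_lt] at hyx
      exact hyx
    have hyx2 : ‖y - x‖ ^ 2 = ‖y - m‖ ^ 2 - 2 * t + h ^ 2 := by
      have heq : y - x = (y - m) - d := by rw [hdm]; abel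
      rw [heq, @norm_sub_sq_real, ← ht, ← hh]
    have htle : t ≤ h ^ 2 - ε ^ 2 / 2 := by
      nlinarith [mul_le_mul hyxε hyxε hε.le (norm_nonneg (y - x)), hyx2, hy2]
    have htc : t ≤ h * (h - c) := by
      nlinarith [htle, hcε, mul_nonneg hc0.le (sub_nonneg.mpr hh1.le)]
    have hyw : y - (m - (s / h) • d) = (y - m) + (s / h) • d := by abel
    have hyw2 : ‖y - (m - (s / h) • d)‖ ^ 2
        = ‖y - m‖ ^ 2 + 2 * (s / h) * t + (s / h) ^ 2 * h ^ 2 := by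
      rw [hyw, @norm_add_sq_real, real_inner_smul_right, ← ht, norm_smul,
        Real.norm_eq_abs, abs_of_pos (show (0:ℝ) < s / h by positivity), ← hh]
      ring
    have hsh : (s / h) ^ 2 * h ^ 2 = s ^ 2 := by
      field_simp
    have h2t : 2 * (s / h) * t ≤ 2 * s * (h - c) := by
      have h6 : 2 * (s / h) * t ≤ 2 * (s / h) * (h * (h - c)) :=
        mul_le_mul_of_nonneg_left htc (by positivity)
      calc 2 * (s / h) * t ≤ 2 * (s / h) * (h * (h - c)) := h6
        _ = 2 * s * (h - c) := by field_simp
    have hfinal : ‖y - (m - (s / h) • d)‖ ^ 2 ≤ 1 := by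
      rw [hyw2, hsh]
      linarith [hy2, h2t, hineq]
    nlinarith [norm_nonneg (y - (m - (s / h) • d)), hfinal]
end

section
/- Let S be a nonempty bounded set of diameter 1 in a finite-dimensional real normed space. S is complete (i.e., no set of diameter 1 properly contains S) if and only if S = 𝔹S, where 𝔹S is the intersection of all closed unit balls centered at points of S. -/
open Set

/-- A bounded set is (diametrically) complete if no set of the same diameter
properly contains it. -/
def IsDiamComplete {X : Type*} [MetricSpace X] (C : Set X) : Prop :=
  ¬ ∃ T : Set X, C ⊂ T ∧ Metric.diam T = Metric.diam C

theorem complete_iff_spherical_intersection {E : Type*} [NormedAddCommGroup E]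
    [NormedSpace ℝ E] [FiniteDimensional ℝ E] (S : Set E)
    (hne : S.Nonempty) (hb : Bornology.IsBounded S) (hd : Metric.diam S = 1) :
    IsDiamComplete S ↔ S = ⋂ p ∈ S, Metric.closedBall p 1 := by
  constructor
  · intro hc
    apply Subset.antisymm
    · intro x hx
      simp only [mem_iInter, Metric.mem_closedBall]
      intro p hp
      calc dist x p ≤ Metric.diam S := Metric.dist_le_diam_of_mem hb hx hp
        _ = 1 := hd
    · intro x hx
      simp only [mem_iInter, Metric.mem_closedBall] at hx
      by_contra hxS
      apply hc
      refine ⟨insert x S, ⟨subset_insert _ _, fun h => hxS (h (mem_insert _ _))⟩, ?_⟩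
      rw [hd]
      have hub : Bornology.IsBounded (insert x S) := hb.insert x
      apply le_antisymm
      · apply Metric.diam_le_of_forall_dist_le zero_le_one
        rintro a (rfl | ha) b (rfl | hb')
        · simp
        · exact hx b hb'
        · rw [dist_comm]; exact hx a ha
        · calc dist a b ≤ Metric.diam S := Metric.dist_le_diam_of_mem hb ha hb'
            _ = 1 := hd
      · rw [← hd]
        exact Metric.diam_mono (subset_insert _ _) hub
  · intro hS
    rintro ⟨T, hST, hT⟩
    rw [hd] at hT
    have hTb : Bornology.IsBounded T := by
      by_contra h
      rw [Metric.diam, Metric.ediam_of_unbounded h] at hT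
      simp at hT
    obtain ⟨x, hxT, hxS⟩ := exists_of_ssubset hST
    apply hxS
    rw [hS]
    simp only [mem_iInter, Metric.mem_closedBall]
    intro p hp
    calc dist x p ≤ Metric.diam T := Metric.dist_le_diam_of_mem hTb hxT (hST.1 hp)
      _ = 1 := hT
end

section
/- Let C be a complete set of diameter 1 in a two-dimensional real normed plane, and suppose [a,b] and [c,d] are two disjoint diameters of C (segments of length 1 joining points of C) such that a, b, c, d appear in counterclockwise order on the boundary of C. Then the segments [a,d] and [b,c] are contained in the boundary of C and are parallel. -/
open Set

section Helpers

variable {E : Type*} [NormedAddCommGroup E] [NormedSpace ℝ E]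

private lemma om_smul_left (ω : E [⋀^Fin 2]→ₗ[ℝ] ℝ) (r : ℝ) (x y : E) :
    ω ![r • x, y] = r * ω ![x, y] := by
  have h2 : Function.update ![x, y] 0 x = ![x, y] := by funext i; fin_cases i <;> simp
  have := ω.map_update_smul ![x, y] 0 r x
  have h : Function.update ![x, y] 0 (r • x) = ![r • x, y] := by funext i; fin_cases i <;> simp
  rw [h, h2] at this; simpa using this

private lemma om_smul_right (ω : E [⋀^Fin 2]→ₗ[ℝ] ℝ) (r : ℝ) (x y : E) :
    ω ![x, r • y] = r * ω ![x, y] := by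
  have h2 : Function.update ![x, y] 1 y = ![x, y] := by funext i; fin_cases i <;> simp
  have := ω.map_update_smul ![x, y] 1 r y
  have h : Function.update ![x, y] 1 (r • y) = ![x, r • y] := by funext i; fin_cases i <;> simp
  rw [h, h2] at this; simpa using this

private lemma om_zero_left (ω : E [⋀^Fin 2]→ₗ[ℝ] ℝ) (y : E) : ω ![(0:E), y] = 0 := by
  have := om_smul_left ω 0 0 y; simpa using this

private lemma om_zero_right (ω : E [⋀^Fin 2]→ₗ[ℝ] ℝ) (x : E) : ω ![x, (0:E)] = 0 := by
  have := om_smul_right ω 0 x 0; simpa using this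

private lemma om_add_left (ω : E [⋀^Fin 2]→ₗ[ℝ] ℝ) (x x' y : E) :
    ω ![x + x', y] = ω ![x, y] + ω ![x', y] := by
  have := ω.map_update_add ![x, y] 0 x x'
  have h : ∀ z : E, Function.update ![x, y] 0 z = ![z, y] := by
    intro z; funext i; fin_cases i <;> simp
  rw [h, h, h] at this; exact this

private lemma om_add_right (ω : E [⋀^Fin 2]→ₗ[ℝ] ℝ) (x y y' : E) :
    ω ![x, y + y'] = ω ![x, y] + ω ![x, y'] := by
  have := ω.map_update_add ![x, y] 1 y y'
  have h : ∀ z : E, Function.update ![x, y] 1 z = ![x, z] := by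
    intro z; funext i; fin_cases i <;> simp
  rw [h, h, h] at this; exact this

private lemma om_self (ω : E [⋀^Fin 2]→ₗ[ℝ] ℝ) (x : E) : ω ![x, x] = 0 :=
  ω.map_eq_zero_of_eq ![x, x] (i := 0) (j := 1) rfl (by decide)

private lemma om_anti (ω : E [⋀^Fin 2]→ₗ[ℝ] ℝ) (x y : E) : ω ![x, y] = - ω ![y, x] := by
  have h := om_self ω (x + y)
  rw [om_add_left, om_add_right, om_add_right, om_self, om_self] at h
  linarith

private lemma om_sub (ω : E [⋀^Fin 2]→ₗ[ℝ] ℝ) (x y z w : E) :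
    ω ![x - y, z - w] = ω ![x, z] - ω ![x, w] - ω ![y, z] + ω ![y, w] := by
  rw [sub_eq_add_neg x y, sub_eq_add_neg z w, om_add_left, om_add_right, om_add_right]
  have n1 : (-y : E) = (-1 : ℝ) • y := by module
  have n2 : (-w : E) = (-1 : ℝ) • w := by module
  rw [n1, n2, om_smul_left, om_smul_right, om_smul_right, om_smul_left]
  ring

private lemma om_span (ω : E [⋀^Fin 2]→ₗ[ℝ] ℝ) (hdim : Module.finrank ℝ E = 2)
    (u v w : E) (h : ω ![u, v] ≠ 0) : ∃ α β : ℝ, w = α • u + β • v := by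
  have hli : LinearIndependent ℝ ![u, v] := by
    rw [LinearIndependent.pair_iff]
    intro s t hst
    have h1 := congrArg (fun z => ω ![z, v]) hst
    simp only [om_add_left, om_smul_left, om_self, om_zero_left, mul_zero, add_zero] at h1
    have h2 := congrArg (fun z => ω ![u, z]) hst
    simp only [om_add_right, om_smul_right, om_self, om_zero_right, mul_zero, zero_add] at h2
    exact ⟨by rcases mul_eq_zero.mp h1 with h'|h'; exact h'; exact absurd h' h,
           by rcases mul_eq_zero.mp h2 with h'|h'; exact h'; exact absurd h' h⟩
  have hcard : Fintype.card (Fin 2) = Module.finrank ℝ E := by simp [hdim]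
  let B := basisOfLinearIndependentOfCardEqFinrank hli hcard
  have hB : ∀ i, B i = ![u, v] i := fun i => by
    simp [B, coe_basisOfLinearIndependentOfCardEqFinrank]
  refine ⟨B.repr w 0, B.repr w 1, ?_⟩
  have hrep := B.sum_repr w
  rw [Fin.sum_univ_two, hB 0, hB 1] at hrep
  exact hrep.symm

private lemma seg_norm (e1 e2 : E) (h1 : ‖e1‖ = 1) (h2 : ‖e2‖ = 1) {s : ℝ}
    (hs0 : 0 < s) (hs1 : s < 1) (hs : ‖s • e1 + (1 - s) • e2‖ = 1)
    {l : ℝ} (hl0 : 0 ≤ l) (hl1 : l ≤ 1) : ‖l • e1 + (1 - l) • e2‖ = 1 := by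
  have hub : ∀ m : ℝ, 0 ≤ m → m ≤ 1 → ‖m • e1 + (1 - m) • e2‖ ≤ 1 := fun m hm0 hm1 => by
    calc ‖m • e1 + (1 - m) • e2‖ ≤ ‖m • e1‖ + ‖(1 - m) • e2‖ := norm_add_le _ _
    _ = m * 1 + (1 - m) * 1 := by
        rw [norm_smul, norm_smul, h1, h2, Real.norm_eq_abs, Real.norm_eq_abs,
          abs_of_nonneg hm0, abs_of_nonneg (by linarith)]
    _ = 1 := by ring
  refine le_antisymm (hub l hl0 hl1) ?_
  rcases le_or_gt l s with hc | hc
  · have hl1' : l < 1 := lt_of_le_of_lt hc hs1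
    have hne : (1 : ℝ) - l ≠ 0 := by intro h; linarith [sub_eq_zero.mp h]
    set μ := (1 - s) / (1 - l) with hμ
    have hμ0 : 0 < μ := div_pos (by linarith) (by linarith)
    have hμ1 : μ ≤ 1 := by rw [div_le_one (by linarith)]; linarith
    have hid : s • e1 + (1 - s) • e2 = μ • (l • e1 + (1 - l) • e2) + (1 - μ) • e1 := by
      rw [hμ]; match_scalars <;> field_simp <;> ring
    have h' : (1 : ℝ) ≤ μ * ‖l • e1 + (1 - l) • e2‖ + (1 - μ) := by
      calc (1 : ℝ) = ‖s • e1 + (1 - s) • e2‖ := hs.symm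
      _ = ‖μ • (l • e1 + (1 - l) • e2) + (1 - μ) • e1‖ := by rw [hid]
      _ ≤ ‖μ • (l • e1 + (1 - l) • e2)‖ + ‖(1 - μ) • e1‖ := norm_add_le _ _
      _ = μ * ‖l • e1 + (1 - l) • e2‖ + (1 - μ) := by
          rw [norm_smul, norm_smul, h1, Real.norm_eq_abs, Real.norm_eq_abs,
            abs_of_pos hμ0, abs_of_nonneg (by linarith)]; ring
    nlinarith [h', hμ0]
  · have hl0' : 0 < l := lt_trans hs0 hc
    have hne : l ≠ 0 := ne_of_gt hl0'
    set μ := s / l with hμ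
    have hμ0 : 0 < μ := div_pos hs0 hl0'
    have hμ1 : μ ≤ 1 := by rw [div_le_one hl0']; linarith
    have hid : s • e1 + (1 - s) • e2 = μ • (l • e1 + (1 - l) • e2) + (1 - μ) • e2 := by
      rw [hμ]; match_scalars <;> field_simp <;> ring
    have h' : (1 : ℝ) ≤ μ * ‖l • e1 + (1 - l) • e2‖ + (1 - μ) := by
      calc (1 : ℝ) = ‖s • e1 + (1 - s) • e2‖ := hs.symm
      _ = ‖μ • (l • e1 + (1 - l) • e2) + (1 - μ) • e2‖ := by rw [hid]
      _ ≤ ‖μ • (l • e1 + (1 - l) • e2)‖ + ‖(1 - μ) • e2‖ := norm_add_le _ _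
      _ = μ * ‖l • e1 + (1 - l) • e2‖ + (1 - μ) := by
          rw [norm_smul, norm_smul, h2, Real.norm_eq_abs, Real.norm_eq_abs,
            abs_of_pos hμ0, abs_of_nonneg (by linarith)]; ring
    nlinarith [h', hμ0]

private lemma mem_frontier_of_dist_one {C : Set E} (hbdd : Bornology.IsBounded C)
    (hd : Metric.diam C = 1) {x y : E} (hx : x ∈ C) (hy : y ∈ C)
    (hxy : ‖x - y‖ = 1) : x ∈ frontier C := by
  have hni : x ∉ interior C := by
    intro hint
    obtain ⟨ε, hε, hball⟩ := Metric.isOpen_iff.mp isOpen_interior x hint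
    set z := x + (ε / 2) • (x - y) with hz
    have hzx : dist z x = ε / 2 := by
      rw [dist_eq_norm]
      have : z - x = (ε / 2) • (x - y) := by rw [hz]; abel
      rw [this, norm_smul, hxy, Real.norm_eq_abs, abs_of_pos (by linarith)]; ring
    have hzC : z ∈ C := interior_subset (hball (by rw [Metric.mem_ball, hzx]; linarith))
    have hzy : dist z y = 1 + ε / 2 := by
      rw [dist_eq_norm]
      have : z - y = (1 + ε / 2) • (x - y) := by rw [hz]; module
      rw [this, norm_smul, hxy, Real.norm_eq_abs, abs_of_pos (by linarith)]; ring
    have := Metric.dist_le_diam_of_mem hbdd hzC hy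
    rw [hd, hzy] at this; linarith
  exact ⟨subset_closure hx, hni⟩

end Helpers

set_option maxHeartbeats 1000000 in
theorem disjoint_diameters {E : Type*} [NormedAddCommGroup E] [NormedSpace ℝ E]
    (hdim : Module.finrank ℝ E = 2)
    (C : Set E) (hC : IsDiamComplete C) (hd : Metric.diam C = 1)
    -- an orientation of the plane, given by a nonzero alternating 2-form
    (ω : E [⋀^Fin 2]→ₗ[ℝ] ℝ) (hω : ω ≠ 0)
    (a b c d : E) (ha : a ∈ C) (hb : b ∈ C) (hc : c ∈ C) (hdd : d ∈ C)
    (hab : dist a b = 1) (hcd : dist c d = 1)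
    (hdisj : Disjoint (segment ℝ a b) (segment ℝ c d))
    -- a, b, c, d are in counterclockwise order on the boundary of C
    (habd : a ∈ frontier C) (hbbd : b ∈ frontier C)
    (hcbd : c ∈ frontier C) (hdbd : d ∈ frontier C)
    (h1 : 0 < ω ![b - a, c - a]) (h2 : 0 < ω ![c - b, d - b])
    (h3 : 0 < ω ![d - c, a - c]) (h4 : 0 < ω ![a - d, b - d]) :
    segment ℝ a d ⊆ frontier C ∧ segment ℝ b c ⊆ frontier C ∧
      ∃ t : ℝ, d - a = t • (c - b) := by
  classical
  -- C is bounded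
  have hbdd : Bornology.IsBounded C := by
    rw [Metric.isBounded_iff_ediam_ne_top]
    intro ht
    rw [Metric.diam, ht] at hd
    simp at hd
  -- C is convex
  have hconv : Convex ℝ C := by
    by_contra h
    exact hC ⟨convexHull ℝ C, (subset_convexHull ℝ C).ssubset_of_ne
      (fun he => h (by rw [he]; exact convex_convexHull ℝ C)), convexHull_diam C⟩
  -- cross-product expansions
  have X1 := om_sub ω b a c a
  have X2 := om_sub ω c b d b
  have X3 := om_sub ω d c a c
  have X4 := om_sub ω a d b d
  have XD := om_sub ω c a d b
  have Xs := om_sub ω b a d b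
  have Xt := om_sub ω c a b a
  have saa := om_self ω a; have sbb := om_self ω b
  have scc := om_self ω c; have sdd := om_self ω d
  have tab := om_anti ω a b; have tac := om_anti ω a c; have tad := om_anti ω a d
  have tbc := om_anti ω b c; have tbd := om_anti ω b d; have tcd := om_anti ω c d
  rw [X1] at h1; rw [X2] at h2; rw [X3] at h3; rw [X4] at h4
  set qab := ω ![a, b] with hqab
  set qac := ω ![a, c] with hqac
  set qad := ω ![a, d] with hqad
  set qba := ω ![b, a] with hqba
  set qbc := ω ![b, c] with hqbc
  set qbd := ω ![b, d] with hqbd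
  set qca := ω ![c, a] with hqca
  set qcb := ω ![c, b] with hqcb
  set qcd := ω ![c, d] with hqcd
  set qda := ω ![d, a] with hqda
  set qdb := ω ![d, b] with hqdb
  set qdc := ω ![d, c] with hqdc
  rw [saa] at h1; rw [sbb] at h2; rw [scc] at h3; rw [sdd] at h4
  -- the diagonals intersect: solve for p = a + α•(c-a) = b + t•(d-b)
  have hD : 0 < ω ![c - a, d - b] := by
    rw [XD]
    linarith only [h1, h3, tab, tac, tad, tbc, tbd, tcd]
  obtain ⟨α, β, hw⟩ := om_span ω hdim (c - a) (d - b) (b - a) (ne_of_gt hD)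
  have hα : ω ![b - a, d - b] = α * ω ![c - a, d - b] := by
    have h' := congrArg (fun z => ω ![z, d - b]) hw
    simp only [om_add_left, om_smul_left, om_self, mul_zero, add_zero] at h'
    exact h'
  have hβ : ω ![c - a, b - a] = β * ω ![c - a, d - b] := by
    have h' := congrArg (fun z => ω ![c - a, z]) hw
    simp only [om_add_right, om_smul_right, om_self, mul_zero, zero_add] at h'
    exact h'
  rw [Xs, XD] at hα
  rw [Xt, XD] at hβ
  rw [XD] at hD
  have hnum : 0 < qbd - ω ![b, b] - qad + qab := by
    rw [sbb]; linarith only [h4, tab, tad, tbd]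
  have hs0 : 0 < α := by
    have hprod : 0 < α * (qcd - qcb - qad + qab) := hα ▸ hnum
    rcases mul_pos_iff.mp hprod with ⟨h', _⟩ | ⟨_, h'⟩
    · exact h'
    · exact absurd hD (not_lt.mpr (le_of_lt h'))
  have hs1 : α < 1 := by
    have hlt : qbd - ω ![b, b] - qad + qab < qcd - qcb - qad + qab := by
      rw [sbb]; linarith only [h2, tbc, tbd, tcd]
    have hprod : α * (qcd - qcb - qad + qab) < 1 * (qcd - qcb - qad + qab) := by
      rw [one_mul]; linarith only [hα, hlt]
    exact lt_of_mul_lt_mul_right hprod (le_of_lt hD)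
  set t := -β with htdef
  have ht0 : 0 < t := by
    have hneg : qcb - qca - qab + ω ![a, a] < 0 := by
      rw [saa]; linarith only [h1, tab, tac, tbc]
    have hprod : β * (qcd - qcb - qad + qab) < 0 := hβ ▸ hneg
    rcases mul_neg_iff.mp hprod with ⟨_, h'⟩ | ⟨h', _⟩
    · exact absurd hD (not_lt.mpr (le_of_lt h'))
    · rw [htdef]; linarith only [h']
  have ht1 : t < 1 := by
    have hlt : -(qcb - qca - qab + ω ![a, a]) < qcd - qcb - qad + qab := by
      rw [saa]; linarith only [h1, h3, tac, tad, tbc, tcd, tab]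
    have hprod : t * (qcd - qcb - qad + qab) < 1 * (qcd - qcb - qad + qab) := by
      rw [one_mul, htdef]; linarith only [hβ, hlt]
    exact lt_of_mul_lt_mul_right hprod (le_of_lt hD)
  have key : a + α • (c - a) = b + t • (d - b) := by
    rw [← sub_eq_zero]
    have h0 : (b - a) - (α • (c - a) + β • (d - b)) = 0 := sub_eq_zero.mpr hw
    have hm : a + α • (c - a) - (b + t • (d - b)) =
        -((b - a) - (α • (c - a) + β • (d - b))) := by rw [htdef]; module
    rw [hm, h0, neg_zero]
  have keyz : a + α • (c - a) - (b + t • (d - b)) = 0 := sub_eq_zero.mpr key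
  clear_value t
  clear hα hβ hw hD hnum htdef X1 X2 X3 X4 XD Xs Xt saa sbb scc sdd
    tab tac tad tbc tbd tcd h1 h2 h3 h4 key β
    hqab hqac hqad hqba hqbc hqbd hqca hqcb hqcd hqda hqdb hqdc
    qab qac qad qba qbc qbd qca qcb qcd qda qdb qdc hω ω hdisj habd hbbd hcbd hdbd hdim hC
  -- metric consequences
  have hA : ‖a - c‖ ≤ 1 := by
    rw [← dist_eq_norm, ← hd]; exact Metric.dist_le_diam_of_mem hbdd ha hc
  have hB : ‖d - b‖ ≤ 1 := by
    rw [← dist_eq_norm, ← hd]; exact Metric.dist_le_diam_of_mem hbdd hdd hb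
  have hab' : ‖a - b‖ = 1 := by rw [← dist_eq_norm]; exact hab
  have hcd' : ‖c - d‖ = 1 := by rw [← dist_eq_norm]; exact hcd
  have Hab : a - b = α • (a - c) + t • (d - b) := by
    rw [← sub_eq_zero]
    have hm : a - b - (α • (a - c) + t • (d - b)) =
        a + α • (c - a) - (b + t • (d - b)) := by module
    rw [hm, keyz]
  have Hcd : c - d = (1 - α) • (c - a) + (1 - t) • (b - d) := by
    rw [← sub_eq_zero]
    have hm : c - d - ((1 - α) • (c - a) + (1 - t) • (b - d)) =
        a + α • (c - a) - (b + t • (d - b)) := by module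
    rw [hm, keyz]
  have i1 : 1 ≤ α * ‖a - c‖ + t * ‖d - b‖ := by
    calc (1 : ℝ) = ‖a - b‖ := hab'.symm
    _ ≤ ‖α • (a - c)‖ + ‖t • (d - b)‖ := by rw [Hab]; exact norm_add_le _ _
    _ = α * ‖a - c‖ + t * ‖d - b‖ := by
        rw [norm_smul, norm_smul, Real.norm_eq_abs, Real.norm_eq_abs,
          abs_of_pos hs0, abs_of_pos ht0]
  have i2 : 1 ≤ (1 - α) * ‖a - c‖ + (1 - t) * ‖d - b‖ := by
    calc (1 : ℝ) = ‖c - d‖ := hcd'.symm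
    _ ≤ ‖(1 - α) • (c - a)‖ + ‖(1 - t) • (b - d)‖ := by rw [Hcd]; exact norm_add_le _ _
    _ = (1 - α) * ‖a - c‖ + (1 - t) * ‖d - b‖ := by
        rw [norm_smul, norm_smul, Real.norm_eq_abs, Real.norm_eq_abs,
          abs_of_pos (by linarith), abs_of_pos (by linarith),
          norm_sub_rev c a, norm_sub_rev b d]
  have hA1 : ‖a - c‖ = 1 := by nlinarith [i1, i2, hA, hB, hs0, hs1, ht0, ht1]
  have hB1 : ‖d - b‖ = 1 := by nlinarith [i1, i2, hA, hB, hs0, hs1, ht0, ht1]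
  have hst : α + t = 1 := by
    rw [hA1, hB1] at i1 i2
    linarith
  have ht' : t = 1 - α := by linarith
  rw [ht'] at keyz
  have hsnorm : ‖α • (a - c) + (1 - α) • (d - b)‖ = 1 := by
    rw [← ht', ← Hab]; exact hab'
  have hall : ∀ l : ℝ, 0 ≤ l → l ≤ 1 → ‖l • (a - c) + (1 - l) • (d - b)‖ = 1 :=
    fun l hl0 hl1 => seg_norm (a - c) (d - b) hA1 hB1 hs0 hs1 hsnorm hl0 hl1
  refine ⟨?_, ?_, ?_⟩
  · -- segment [a, d] ⊆ frontier C
    rintro x ⟨μ, ν, hμ, hν, hμν, rfl⟩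
    have hν' : ν = 1 - μ := by linarith
    subst hν'
    have hμ1 : μ ≤ 1 := by linarith
    have hxC : μ • a + (1 - μ) • d ∈ C := hconv ha hdd hμ (by linarith) (by ring)
    have hyC : μ • b + (1 - μ) • c ∈ C := hconv hb hc hμ (by linarith) (by ring)
    set lam := μ * α + (1 - μ) * (1 - α) with hlam
    have hdiff : (μ • a + (1 - μ) • d) - (μ • b + (1 - μ) • c) =
        lam • (a - c) + (1 - lam) • (d - b) := by
      rw [← sub_eq_zero]
      have hm : (μ • a + (1 - μ) • d) - (μ • b + (1 - μ) • c) -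
          (lam • (a - c) + (1 - lam) • (d - b)) =
          (2 * μ - 1) • (a + α • (c - a) - (b + (1 - α) • (d - b))) := by
        rw [hlam]; module
      rw [hm, keyz, smul_zero]
    have hl0 : 0 ≤ lam := by nlinarith
    have hl1 : lam ≤ 1 := by nlinarith
    exact mem_frontier_of_dist_one hbdd hd hxC hyC (by rw [hdiff]; exact hall lam hl0 hl1)
  · -- segment [b, c] ⊆ frontier C
    rintro x ⟨μ, ν, hμ, hν, hμν, rfl⟩
    have hν' : ν = 1 - μ := by linarith
    subst hν'
    have hμ1 : μ ≤ 1 := by linarith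
    have hxC : μ • b + (1 - μ) • c ∈ C := hconv hb hc hμ (by linarith) (by ring)
    have hyC : μ • a + (1 - μ) • d ∈ C := hconv ha hdd hμ (by linarith) (by ring)
    set lam := μ * α + (1 - μ) * (1 - α) with hlam
    have hdiff : (μ • b + (1 - μ) • c) - (μ • a + (1 - μ) • d) =
        -(lam • (a - c) + (1 - lam) • (d - b)) := by
      rw [← sub_eq_zero]
      have hm : (μ • b + (1 - μ) • c) - (μ • a + (1 - μ) • d) -
          (-(lam • (a - c) + (1 - lam) • (d - b))) =
          (1 - 2 * μ) • (a + α • (c - a) - (b + (1 - α) • (d - b))) := by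
        rw [hlam]; module
      rw [hm, keyz, smul_zero]
    have hl0 : 0 ≤ lam := by nlinarith
    have hl1 : lam ≤ 1 := by nlinarith
    refine mem_frontier_of_dist_one hbdd hd hxC hyC ?_
    rw [hdiff, norm_neg]
    exact hall lam hl0 hl1
  · -- parallel sides
    refine ⟨α / (1 - α), ?_⟩
    have Hda : d - a = α • ((d - b) - (a - c)) := by
      rw [← sub_eq_zero]
      have hm : d - a - α • ((d - b) - (a - c)) =
          -(a + α • (c - a) - (b + (1 - α) • (d - b))) := by module
      rw [hm, keyz, neg_zero]
    have Hcb : c - b = (1 - α) • ((d - b) - (a - c)) := by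
      rw [← sub_eq_zero]
      have hm : c - b - (1 - α) • ((d - b) - (a - c)) =
          a + α • (c - a) - (b + (1 - α) • (d - b)) := by module
      rw [hm, keyz]
    rw [Hda, Hcb, smul_smul, div_mul_cancel₀ _ (by intro h'; linarith [sub_eq_zero.mp h'] : (1:ℝ) - α ≠ 0)]
end

section
/- Let C be a complete convex body of diameter 1 in a two-dimensional real normed plane, and let p be a point of the boundary of C. Then the set of points of C at unit distance from p is a connected arc of S(p) ∩ ∂C, where S(p) is the unit sphere centered at p. -/
open Set

set_option maxHeartbeats 1600000

section Aux

variable {E : Type*} [NormedAddCommGroup E] [NormedSpace ℝ E]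

lemma cross_ineq (a b x y : E) (l s : ℝ) (hl0 : 0 ≤ l) (hl1 : l ≤ 1)
    (hs0 : 0 ≤ s) (hs1 : s ≤ 1)
    (h : (1-l)•a + l•b = (1-s)•x + s•y) :
    ‖a - x‖ + ‖b - y‖ ≤ ‖a - b‖ + ‖x - y‖ := by
  have h1 : a - x = l•(a-b) + s•(y-x) := by linear_combination (norm := module) h
  have h2 : b - y = (1-l)•(b-a) + (1-s)•(x-y) := by linear_combination (norm := module) h
  have n1 : ‖a - x‖ ≤ l*‖a-b‖ + s*‖x-y‖ := by
    calc ‖a - x‖ ≤ ‖l•(a-b)‖ + ‖s•(y-x)‖ := by rw [h1]; exact norm_add_le _ _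
    _ = l*‖a-b‖ + s*‖x-y‖ := by
        rw [norm_smul, norm_smul, Real.norm_eq_abs, Real.norm_eq_abs,
          abs_of_nonneg hl0, abs_of_nonneg hs0, norm_sub_rev y x]
  have n2 : ‖b - y‖ ≤ (1-l)*‖a-b‖ + (1-s)*‖x-y‖ := by
    calc ‖b - y‖ ≤ ‖(1-l)•(b-a)‖ + ‖(1-s)•(x-y)‖ := by rw [h2]; exact norm_add_le _ _
    _ = (1-l)*‖a-b‖ + (1-s)*‖x-y‖ := by
        rw [norm_smul, norm_smul, Real.norm_eq_abs, Real.norm_eq_abs,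
          abs_of_nonneg (by linarith), abs_of_nonneg (by linarith), norm_sub_rev b a]
  linarith

lemma eq_triangle_scale {X Y : E} (h : ‖X + Y‖ = ‖X‖ + ‖Y‖) {s t : ℝ}
    (hst : 0 ≤ t) (hts : t ≤ s) :
    ‖s•X + t•Y‖ = s*‖X‖ + t*‖Y‖ := by
  have hs : 0 ≤ s := le_trans hst hts
  have hid : s•X + t•Y = s•(X+Y) - (s-t)•Y := by module
  have hge : s*‖X+Y‖ - (s-t)*‖Y‖ ≤ ‖s•X + t•Y‖ := by
    have := norm_sub_norm_le (s•(X+Y)) ((s-t)•Y)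
    rw [← hid] at this
    rw [norm_smul, norm_smul, Real.norm_eq_abs, Real.norm_eq_abs,
      abs_of_nonneg hs, abs_of_nonneg (by linarith)] at this
    linarith
  have hle : ‖s•X + t•Y‖ ≤ s*‖X‖ + t*‖Y‖ := by
    calc ‖s•X + t•Y‖ ≤ ‖s•X‖ + ‖t•Y‖ := norm_add_le _ _
    _ = s*‖X‖ + t*‖Y‖ := by
        rw [norm_smul, norm_smul, Real.norm_eq_abs, Real.norm_eq_abs,
          abs_of_nonneg hs, abs_of_nonneg hst]
  rw [h] at hge
  have : s*(‖X‖+‖Y‖) - (s-t)*‖Y‖ = s*‖X‖ + t*‖Y‖ := by ring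
  linarith

lemma crux_aux {u v c : E} (hu : ‖u‖ = 1) (hv : ‖v‖ = 1) (huv : ‖u - v‖ ≤ 1)
    (hc0 : ‖c‖ ≤ 1) (hcu : ‖c - u‖ ≤ 1) (hcv : ‖c - v‖ ≤ 1)
    {α β t : ℝ} (hrep : c = α•u + β•v) (ht0 : 0 ≤ t) (ht1 : t ≤ 1)
    (hP : β*(1-t) ≤ α*t) :
    ‖‖(1-t)•u + t•v‖⁻¹ • ((1-t)•u + t•v) - c‖ ≤ 1 := by
  rcases eq_or_lt_of_le ht0 with h0 | h0
  · have ht : t = 0 := h0.symm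
    subst ht
    simp only [sub_zero, one_smul, zero_smul, add_zero, hu, inv_one]
    rw [norm_sub_rev]; exact hcu
  rcases eq_or_lt_of_le ht1 with h1 | h1
  · subst h1
    simp only [sub_self, zero_smul, one_smul, zero_add, hv, inv_one]
    rw [norm_sub_rev]; exact hcv
  set w : E := (1-t)•u + t•v with hw
  set n : ℝ := ‖w‖ with hn
  have hn1 : n ≤ 1 := by
    calc n ≤ ‖(1-t)•u‖ + ‖t•v‖ := norm_add_le _ _
    _ = 1 := by
        rw [norm_smul, norm_smul, Real.norm_eq_abs, Real.norm_eq_abs, hu, hv,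
          abs_of_nonneg (by linarith), abs_of_nonneg ht0]; ring
  have hn0 : 0 < n := by
    have hid : u = w + t•(u-v) := by rw [hw]; module
    have h2 : ‖u‖ ≤ ‖w‖ + ‖t•(u-v)‖ := by
      conv_lhs => rw [hid]
      exact norm_add_le _ _
    rw [hu, norm_smul, Real.norm_eq_abs, abs_of_nonneg ht0] at h2
    have h3 : t*‖u-v‖ ≤ t*1 := mul_le_mul_of_nonneg_left huv ht0
    rw [← hn] at h2
    linarith
  set z : E := n⁻¹ • w with hzdef
  have hnz : n • z = w := by rw [hzdef, smul_smul, mul_inv_cancel₀ hn0.ne', one_smul]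
  have hzn : ‖z‖ = 1 := by
    rw [hzdef, norm_smul, Real.norm_eq_abs, abs_of_nonneg (by positivity), ← hn]
    field_simp
  set μ : ℝ := (1-t)/n with hμ
  set ν : ℝ := t/n with hν
  have hμ0 : 0 < μ := div_pos (by linarith) hn0
  have hν0 : 0 < ν := div_pos h0 hn0
  have hσ : 1 ≤ μ + ν := by
    rw [hμ, hν, ← add_div, le_div_iff₀ hn0]; linarith
  have hz : z = μ•u + ν•v := by
    rw [hzdef, hw, hμ, hν, smul_add, smul_smul, smul_smul]
    congr 2 <;> field_simp <;> ring
  have h0z : ‖(0:E) - z‖ = 1 := by rw [zero_sub, norm_neg, hzn]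
  have hzv : ‖z - v‖ ≤ ‖u - v‖ := by
    have hcr := cross_ineq (0:E) z u v n t hn0.le hn1 ht0 ht1
      (by rw [smul_zero, zero_add, hnz, hw])
    rw [zero_sub, norm_neg, hu, h0z] at hcr
    linarith
  have hzu : ‖z - u‖ ≤ ‖u - v‖ := by
    have hcr := cross_ineq (0:E) z v u n (1-t) hn0.le hn1 (by linarith) (by linarith)
      (by rw [smul_zero, zero_add, hnz, hw]; module)
    rw [zero_sub, norm_neg, hv, h0z, norm_sub_rev v u] at hcr
    linarith
  set P : ℝ := α*ν - β*μ with hPdef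
  have hP0 : 0 ≤ P := by
    have hcalc : α * ν - β * μ = (α*t - β*(1-t))/n := by rw [hμ, hν]; ring
    rw [hPdef, hcalc]
    exact div_nonneg (by linarith) hn0.le
  rcases le_or_gt α 0 with hα | hα
  · -- Case A : α ≤ 0 and hence β ≤ 0
    have hβ : β ≤ 0 := by nlinarith
    set a : ℝ := -α with ha
    set b : ℝ := -β with hb
    have ha0 : 0 ≤ a := by rw [ha]; linarith
    have hb0 : 0 ≤ b := by rw [hb]; linarith
    have hq1 : u - c = (1+a)•u + b•v := by rw [hrep, ha, hb]; module
    have hq2 : v - c = a•u + (1+b)•v := by rw [hrep, ha, hb]; module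
    have hab : a ≤ b := by
      have e1 : (1+a)•u = (u - c) - b•v := by rw [hq1]; module
      have e2 : ‖(1+a)•u‖ ≤ ‖u - c‖ + ‖b•v‖ := by rw [e1]; exact norm_sub_le _ _
      rw [norm_smul, norm_smul, Real.norm_eq_abs, Real.norm_eq_abs, hu, hv,
        abs_of_nonneg (by linarith), abs_of_nonneg hb0, norm_sub_rev] at e2
      linarith
    have hba : b ≤ a := by
      have e1 : (1+b)•v = (v - c) - a•u := by rw [hq2]; module
      have e2 : ‖(1+b)•v‖ ≤ ‖v - c‖ + ‖a•u‖ := by rw [e1]; exact norm_sub_le _ _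
      rw [norm_smul, norm_smul, Real.norm_eq_abs, Real.norm_eq_abs, hu, hv,
        abs_of_nonneg (by linarith), abs_of_nonneg ha0, norm_sub_rev] at e2
      linarith
    have haeb : a = b := le_antisymm hab hba
    rcases eq_or_lt_of_le ha0 with haz | hapos
    · have hc : c = 0 := by
        have hα0 : α = 0 := by rw [ha] at haz; linarith
        have hβ0 : β = 0 := by rw [hb] at haeb; rw [ha] at haz; linarith
        rw [hrep, hα0, hβ0]; simp
      rw [hc, sub_zero, hzn]
    · exfalso
      have hucn : ‖u - c‖ = 1 := by
        have e1 : (1+a)•u = (u - c) - a•v := by rw [hq1, ← haeb]; module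
        have e2 : ‖(1+a)•u‖ ≤ ‖u - c‖ + ‖a•v‖ := by rw [e1]; exact norm_sub_le _ _
        rw [norm_smul, norm_smul, Real.norm_eq_abs, Real.norm_eq_abs, hu, hv,
          abs_of_nonneg (by linarith), abs_of_nonneg ha0] at e2
        have h3 : ‖u - c‖ ≤ 1 := by rw [norm_sub_rev]; exact hcu
        linarith
      have heq : ‖(-(a•v)) + (u - c)‖ = ‖-(a•v)‖ + ‖u - c‖ := by
        have e1 : (-(a•v)) + (u - c) = (1+a)•u := by rw [hq1, ← haeb]; module
        rw [e1, norm_smul, norm_neg, norm_smul, Real.norm_eq_abs, Real.norm_eq_abs,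
          hu, hv, abs_of_nonneg (by linarith), abs_of_nonneg ha0, hucn]
        ring
      have hscale := eq_triangle_scale heq (s := (1+2*a)/(a*(1+a))) (t := 1/(1+a))
        (by positivity)
        (by rw [div_le_div_iff₀ (by positivity) (by positivity)]; nlinarith)
      have hid : ((1+2*a)/(a*(1+a)))•(-(a•v)) + (1/(1+a))•(u - c) = u - v := by
        rw [hq1, ← haeb]
        match_scalars <;> field_simp <;> ring
      rw [hid, norm_neg, norm_smul, Real.norm_eq_abs, abs_of_nonneg ha0, hv, hucn] at hscale
      have : ‖u - v‖ = 2 := by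
        rw [hscale]; field_simp; ring
      linarith
  · -- Case B : 0 < α
    rcases eq_or_lt_of_le hP0 with hPz | hPpos
    · -- P = 0 : c is a nonnegative multiple of z
      have hβeq : β = α*ν/μ := by
        rw [eq_div_iff hμ0.ne']
        rw [hPdef] at hPz
        linarith
      have hc : c = (α/μ)•z := by
        rw [hrep, hz, hβeq]
        match_scalars <;> field_simp <;> ring
      have hsle : α/μ ≤ 1 := by
        have : ‖c‖ = α/μ := by
          rw [hc, norm_smul, hzn, Real.norm_eq_abs,
            abs_of_nonneg (le_of_lt (div_pos hα hμ0))]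
          ring
        linarith
      have hid2 : z - (α/μ)•z = (1-α/μ)•z := by module
      rw [hc, hid2, norm_smul, Real.norm_eq_abs, hzn,
        abs_of_nonneg (by linarith)]
      have : 0 ≤ α/μ := (div_pos hα hμ0).le
      linarith
    · -- P > 0
      rcases le_or_gt α (μ + P) with hB1 | hB2
      · -- crossing (ii)
        have hden : 0 < μ + P := by linarith
        have hcr := cross_ineq c v z 0 (P/(μ+P)) ((μ+P-α)/(μ+P))
          (div_nonneg hPpos.le hden.le) (by rw [div_le_one hden]; linarith)
          (div_nonneg (by linarith) hden.le) (by rw [div_le_one hden]; linarith)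
          (by
            rw [hrep, hz, smul_zero, add_zero]
            match_scalars
            · field_simp; ring
            · field_simp
              rw [hPdef]; ring)
        simp only [sub_zero] at hcr
        rw [hv, hzn, norm_sub_rev c z] at hcr
        linarith
      · rcases le_or_gt β 0 with hβn | hβp
        · -- hull case
          have hkey : μ*(1-β) < α*(1-ν) := by nlinarith [hB2]
          have hν1 : ν < 1 := by nlinarith
          have hD : 0 < α + β - 1 := by nlinarith [hσ]
          set d : ℝ := (μ+ν-1)/(α+β-1) with hd
          have hd0 : 0 ≤ d := div_nonneg (by linarith) hD.le
          have hγ1 : 0 ≤ μ - d*α := by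
            rw [sub_nonneg, hd, div_mul_eq_mul_div, div_le_iff₀ hD]
            nlinarith
          have hγ2 : 0 ≤ ν - d*β := by nlinarith [mul_nonneg hd0 (neg_nonneg.mpr hβn)]
          have hsum : (μ - d*α) + (ν - d*β) = 1 - d := by
            rw [hd]; field_simp; ring
          have hid : z - c = (μ - d*α)•(u - c) + (ν - d*β)•(v - c) := by
            have e : (μ - d*α)•(u-c) + (ν - d*β)•(v-c)
                = (μ - d*α)•u + (ν - d*β)•v - ((μ - d*α)+(ν - d*β))•c := by module
            rw [e, hsum]
            have e2 : (μ - d*α)•u + (ν - d*β)•v - (1-d)•c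
                = μ•u + ν•v - c - d•(α•u + β•v - c) := by module
            rw [e2, ← hrep, sub_self, smul_zero, sub_zero, hz]
          rw [hid]
          calc ‖(μ - d*α)•(u - c) + (ν - d*β)•(v - c)‖
              ≤ ‖(μ - d*α)•(u - c)‖ + ‖(ν - d*β)•(v - c)‖ := norm_add_le _ _
          _ = (μ - d*α)*‖u - c‖ + (ν - d*β)*‖v - c‖ := by
              rw [norm_smul, norm_smul, Real.norm_eq_abs, Real.norm_eq_abs,
                abs_of_nonneg hγ1, abs_of_nonneg hγ2]
          _ ≤ (μ - d*α)*1 + (ν - d*β)*1 := by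
              have l1 : ‖u - c‖ ≤ 1 := by rw [norm_sub_rev]; exact hcu
              have l2 : ‖v - c‖ ≤ 1 := by rw [norm_sub_rev]; exact hcv
              gcongr
          _ ≤ 1 := by rw [mul_one, mul_one]; linarith
        · rcases le_or_gt ν (β + P) with hB2b | hB2c
          · -- crossing (iii)
            have hden : 0 < P + β := by linarith
            have hcr := cross_ineq c 0 z u (1 - ν/(P+β)) (P/(P+β))
              (by rw [sub_nonneg, div_le_one hden]; linarith)
              (by have : 0 ≤ ν/(P+β) := div_nonneg hν0.le hden.le; linarith)
              (div_nonneg hPpos.le hden.le) (by rw [div_le_one hden]; linarith)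
              (by
                rw [hrep, hz, smul_zero, add_zero]
                match_scalars
                · field_simp
                  rw [hPdef]; ring
                · field_simp; ring)
            simp only [zero_sub, sub_zero, norm_neg] at hcr
            rw [hu, norm_sub_rev c z] at hcr
            linarith
          · exfalso
            have e1 : (μ+P)*ν < α*ν := by
              exact mul_lt_mul_of_pos_right hB2 hν0
            have e2 : β*μ < (ν-P)*μ := mul_lt_mul_of_pos_right (by linarith) hμ0
            have e3 : P*1 ≤ P*(μ+ν) := mul_le_mul_of_nonneg_left hσ hPpos.le
            rw [hPdef] at *
            nlinarith

lemma crux {u v c : E} (hu : ‖u‖ = 1) (hv : ‖v‖ = 1) (huv : ‖u - v‖ ≤ 1)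
    (hc0 : ‖c‖ ≤ 1) (hcu : ‖c - u‖ ≤ 1) (hcv : ‖c - v‖ ≤ 1)
    {α β t : ℝ} (hrep : c = α•u + β•v) (ht0 : 0 ≤ t) (ht1 : t ≤ 1) :
    ‖‖(1-t)•u + t•v‖⁻¹ • ((1-t)•u + t•v) - c‖ ≤ 1 := by
  rcases le_or_gt (β*(1-t)) (α*t) with h | h
  · exact crux_aux hu hv huv hc0 hcu hcv hrep ht0 ht1 h
  · have hrep' : c = β•v + α•u := by rw [hrep]; module
    have h2 := crux_aux (t := 1-t) hv hu (by rw [norm_sub_rev]; exact huv) hc0 hcv hcu hrep'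
      (by linarith) (by linarith)
      (by rw [show (1:ℝ)-(1-t) = t from by ring]; linarith)
    have e : (1-(1-t))•v + (1-t)•u = (1-t)•u + t•v := by module
    rw [e] at h2
    exact h2

end Aux

theorem unit_dist_set_is_arc {E : Type*} [NormedAddCommGroup E] [NormedSpace ℝ E]
    (hdim : Module.finrank ℝ E = 2)
    (C : Set E) (hconv : Convex ℝ C) (hcpt : IsCompact C)
    (hC : IsDiamComplete C) (hd : Metric.diam C = 1)
    (p : E) (hp : p ∈ frontier C) :
    {x | x ∈ C ∧ dist p x = 1} ⊆ Metric.sphere p 1 ∩ frontier C ∧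
      IsConnected {x | x ∈ C ∧ dist p x = 1} := by
  have hbd := hcpt.isBounded
  have hclosed := hcpt.isClosed
  have hpC : p ∈ C := by
    have h1 := frontier_subset_closure (s := C) hp
    rwa [hclosed.closure_eq] at h1
  have hCne : C.Nonempty := ⟨p, hpC⟩
  have hdle : ∀ x ∈ C, ∀ y ∈ C, dist x y ≤ 1 := fun x hx y hy => by
    have h1 := Metric.dist_le_diam_of_mem hbd hx hy; rwa [hd] at h1
  -- spherical intersection property
  have sph : ∀ z : E, (∀ c ∈ C, dist z c ≤ 1) → z ∈ C := by
    intro z hz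
    by_contra hzC
    apply hC
    refine ⟨insert z C, ssubset_insert hzC, ?_⟩
    rw [hd]
    apply le_antisymm
    · apply Metric.diam_le_of_forall_dist_le zero_le_one
      intro x hx y hy
      simp only [Set.mem_insert_iff] at hx hy
      rcases hx with rfl | hx
      · rcases hy with rfl | hy
        · simp
        · exact hz y hy
      · rcases hy with rfl | hy
        · rw [dist_comm]; exact hz x hx
        · exact hdle x hx y hy
    · rw [← hd]; exact Metric.diam_mono (subset_insert _ _) (hbd.insert z)
  -- points of C at distance 1 from p are frontier points
  have hfr : ∀ x, x ∈ C → dist p x = 1 → x ∈ frontier C := by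
    intro x hx hdist
    rw [frontier_eq_closure_inter_closure]
    refine ⟨subset_closure hx, ?_⟩
    rw [Metric.mem_closure_iff]
    intro ε hε
    have hm0 : 0 < min (ε/2) 1 := lt_min (by linarith) one_pos
    refine ⟨x + (min (ε/2) 1) • (x - p), ?_, ?_⟩
    · intro hmem
      have hdx : dist p (x + (min (ε/2) 1)•(x-p)) = 1 + min (ε/2) 1 := by
        rw [dist_eq_norm]
        have h1 : p - (x + (min (ε/2) 1)•(x-p)) = (1 + min (ε/2) 1)•(p - x) := by module
        rw [h1, norm_smul, Real.norm_eq_abs, abs_of_pos (by linarith),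
          ← dist_eq_norm, hdist, mul_one]
      have h2 := hdle p hpC _ hmem
      rw [hdx] at h2
      linarith
    · rw [dist_eq_norm]
      have h1 : x - (x + (min (ε/2) 1)•(x-p)) = (min (ε/2) 1)•(p - x) := by module
      rw [h1, norm_smul, Real.norm_eq_abs, abs_of_pos hm0, ← dist_eq_norm, hdist, mul_one]
      have := min_le_left (ε/2) 1
      linarith
  constructor
  · rintro x ⟨hx, hdx⟩
    exact ⟨by rw [Metric.mem_sphere, dist_comm]; exact hdx, hfr x hx hdx⟩
  -- the farthest point x₀
  obtain ⟨x₀, hx₀C, hx₀max⟩ := hcpt.exists_isMaxOn hCne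
    ((continuous_const.dist continuous_id).continuousOn (s := C))
  have hx₀1 : dist p x₀ = 1 := by
    have hle1 : dist p x₀ ≤ 1 := hdle p hpC x₀ hx₀C
    by_contra hne
    have hlt : dist p x₀ < 1 := lt_of_le_of_ne hle1 hne
    have hpcl : p ∈ closure Cᶜ := by
      rw [frontier_eq_closure_inter_closure] at hp; exact hp.2
    rw [Metric.mem_closure_iff] at hpcl
    obtain ⟨zz, hzz, hdzz⟩ := hpcl (1 - dist p x₀) (by linarith)
    refine hzz (sph zz ?_)
    intro c hc
    have h3 : dist p c ≤ dist p x₀ := hx₀max hc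
    have h4 : dist zz p < 1 - dist p x₀ := by rwa [dist_comm] at hdzz
    calc dist zz c ≤ dist zz p + dist p c := dist_triangle _ _ _
    _ ≤ 1 := by linarith
  have hx₀A : x₀ ∈ {x | x ∈ C ∧ dist p x = 1} := ⟨hx₀C, hx₀1⟩
  -- norm facts
  have hnorm1 : ∀ y, dist p y = 1 → ‖y - p‖ = 1 := by
    intro y hy
    rw [← hy, dist_eq_norm, norm_sub_rev]
  -- the path map
  set f : E → ℝ → E := fun y t =>
    p + ‖(1-t)•(x₀-p) + t•(y-p)‖⁻¹ • ((1-t)•(x₀-p) + t•(y-p)) with hf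
  -- nonvanishing of the norm
  have hwpos : ∀ y, y ∈ C → dist p y = 1 → ∀ t : ℝ, t ∈ Icc (0:ℝ) 1 →
      0 < ‖(1-t)•(x₀-p) + t•(y-p)‖ := by
    intro y hyC hy1 t ht
    obtain ⟨ht0, ht1⟩ := ht
    have hu : ‖x₀ - p‖ = 1 := hnorm1 _ hx₀1
    have hv : ‖y - p‖ = 1 := hnorm1 _ hy1
    have huv : ‖(x₀ - p) - (y - p)‖ ≤ 1 := by
      rw [sub_sub_sub_cancel_right, ← dist_eq_norm]
      exact hdle _ hx₀C _ hyC
    set w := (1-t)•(x₀-p) + t•(y-p) with hw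
    have e1 : ‖x₀ - p‖ = ‖w + t•((x₀-p)-(y-p))‖ := by
      congr 1
      rw [hw]; module
    have e2 : ‖y - p‖ = ‖w - (1-t)•((x₀-p)-(y-p))‖ := by
      congr 1
      rw [hw]; module
    have n1 : (1:ℝ) ≤ ‖w‖ + t*‖(x₀-p)-(y-p)‖ := by
      calc (1:ℝ) = ‖x₀ - p‖ := hu.symm
      _ ≤ ‖w‖ + ‖t•((x₀-p)-(y-p))‖ := by rw [e1]; exact norm_add_le _ _
      _ = ‖w‖ + t*‖(x₀-p)-(y-p)‖ := by
          rw [norm_smul, Real.norm_eq_abs, abs_of_nonneg ht0]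
    have n2 : (1:ℝ) ≤ ‖w‖ + (1-t)*‖(x₀-p)-(y-p)‖ := by
      calc (1:ℝ) = ‖y - p‖ := hv.symm
      _ ≤ ‖w‖ + ‖(1-t)•((x₀-p)-(y-p))‖ := by
            rw [e2]; exact norm_sub_le _ _
      _ = ‖w‖ + (1-t)*‖(x₀-p)-(y-p)‖ := by
          rw [norm_smul, Real.norm_eq_abs, abs_of_nonneg (by linarith)]
    have hnn : 0 ≤ ‖(x₀-p)-(y-p)‖ := norm_nonneg _
    nlinarith
  -- key: every point of the radial path lies in the distance-1 set
  have key : ∀ y, y ∈ C → dist p y = 1 → ∀ t : ℝ, t ∈ Icc (0:ℝ) 1 →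
      f y t ∈ C ∧ dist p (f y t) = 1 := by
    intro y hyC hy1 t ht
    obtain ⟨ht0, ht1⟩ := ht
    have hu : ‖x₀ - p‖ = 1 := hnorm1 _ hx₀1
    have hv : ‖y - p‖ = 1 := hnorm1 _ hy1
    have hwp := hwpos y hyC hy1 t ⟨ht0, ht1⟩
    have hdistf : dist p (f y t) = 1 := by
      simp only [hf]
      rw [dist_eq_norm]
      have e : p - (p + ‖(1-t)•(x₀-p) + t•(y-p)‖⁻¹ • ((1-t)•(x₀-p) + t•(y-p)))
          = -(‖(1-t)•(x₀-p) + t•(y-p)‖⁻¹ • ((1-t)•(x₀-p) + t•(y-p))) := by abel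
      rw [e, norm_neg, norm_smul, Real.norm_eq_abs, abs_of_pos (inv_pos.mpr hwp),
        inv_mul_cancel₀ hwp.ne']
    refine ⟨?_, hdistf⟩
    by_cases hxy : y = x₀
    · subst hxy
      simp only [hf]
      have hvec : (1-t)•(y-p) + t•(y-p) = y-p := by module
      rw [hvec, hv, inv_one, one_smul]
      have e : p + (y - p) = y := by abel
      rw [e]; exact hyC
    · apply sph
      intro c hc
      have huv : ‖(x₀-p) - (y-p)‖ ≤ 1 := by
        rw [sub_sub_sub_cancel_right, ← dist_eq_norm]
        exact hdle _ hx₀C _ hyC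
      have hindep : LinearIndependent ℝ ![x₀ - p, y - p] := by
        rw [LinearIndependent.pair_iff]
        intro s r hsr
        have hune : x₀ - p ≠ 0 := by
          intro h; rw [h, norm_zero] at hu; norm_num at hu
        by_cases hr : r = 0
        · subst hr
          rw [zero_smul, add_zero] at hsr
          rcases smul_eq_zero.mp hsr with h | h
          · exact ⟨h, rfl⟩
          · exact absurd h hune
        · exfalso
          have h2 : r • (y - p) = (-s) • (x₀ - p) := by
            linear_combination (norm := module) hsr
          have h3 : y - p = (r⁻¹ * (-s)) • (x₀ - p) := by
            rw [← smul_smul, ← h2, smul_smul, inv_mul_cancel₀ hr, one_smul]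
          have hk : |r⁻¹ * (-s)| = 1 := by
            have h4 : ‖y - p‖ = |r⁻¹ * (-s)| * ‖x₀ - p‖ := by
              rw [h3, norm_smul, Real.norm_eq_abs]
            rw [hv, hu, mul_one] at h4
            exact h4.symm
          rcases (abs_eq (by norm_num : (0:ℝ) ≤ 1)).mp hk with hk1 | hk1
          · apply hxy
            have h5 : y - p = x₀ - p := by rw [h3, hk1, one_smul]
            exact sub_left_inj.mp h5
          · have h5 : (x₀-p) - (y-p) = (2:ℝ) • (x₀ - p) := by
              rw [h3, hk1]; module
            rw [h5, norm_smul, Real.norm_eq_abs, hu] at huv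
            norm_num at huv
      have hspan := hindep.span_eq_top_of_card_eq_finrank (by rw [hdim]; simp)
      have hcp : c - p ∈ Submodule.span ℝ {x₀ - p, y - p} := by
        have hr : range ![x₀ - p, y - p] = {x₀ - p, y - p} := by
          simp only [Matrix.range_cons, Matrix.range_empty, Set.union_empty,
            Set.union_singleton]
          exact Set.pair_comm _ _
        rw [← hr, hspan]; trivial
      obtain ⟨a, b, hab⟩ := Submodule.mem_span_pair.mp hcp
      have hc0 : ‖c - p‖ ≤ 1 := by
        rw [← dist_eq_norm]; exact hdle c hc p hpC
      have hcu : ‖(c-p) - (x₀-p)‖ ≤ 1 := by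
        rw [sub_sub_sub_cancel_right, ← dist_eq_norm]
        exact hdle _ hc _ hx₀C
      have hcv : ‖(c-p) - (y-p)‖ ≤ 1 := by
        rw [sub_sub_sub_cancel_right, ← dist_eq_norm]
        exact hdle _ hc _ hyC
      have hcrux := crux hu hv huv hc0 hcu hcv hab.symm ht0 ht1
      rw [dist_eq_norm]
      have e : f y t - c = (‖(1-t)•(x₀-p) + t•(y-p)‖⁻¹ • ((1-t)•(x₀-p) + t•(y-p)))
          - (c - p) := by
        simp only [hf]; abel
      rw [e]
      exact hcrux
  -- assembly
  refine ⟨⟨x₀, hx₀A⟩, ?_⟩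
  have hKsub : ∀ y ∈ {x | x ∈ C ∧ dist p x = 1},
      (f y '' Icc 0 1) ⊆ {x | x ∈ C ∧ dist p x = 1} := by
    rintro y hy q ⟨t, ht, rfl⟩
    exact key y hy.1 hy.2 t ht
  have hx₀K : ∀ y, x₀ ∈ f y '' Icc 0 1 := by
    intro y
    refine ⟨0, ⟨le_rfl, zero_le_one⟩, ?_⟩
    simp only [hf]
    norm_num
    rw [hnorm1 _ hx₀1, inv_one, one_smul]
    abel
  have hyK : ∀ y, y ∈ C → dist p y = 1 → y ∈ f y '' Icc 0 1 := by
    intro y hyC hy1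
    refine ⟨1, ⟨zero_le_one, le_rfl⟩, ?_⟩
    simp only [hf]
    norm_num
    rw [hnorm1 _ hy1, inv_one, one_smul]
    abel
  have hAeq : {x | x ∈ C ∧ dist p x = 1}
      = ⋃₀ ((fun y => f y '' Icc 0 1) '' {x | x ∈ C ∧ dist p x = 1}) := by
    apply Subset.antisymm
    · intro q hq
      exact ⟨f q '' Icc 0 1, ⟨q, hq, rfl⟩, hyK q hq.1 hq.2⟩
    · rintro q ⟨S, ⟨y, hy, rfl⟩, hqS⟩
      exact hKsub y hy hqS
  rw [hAeq]
  apply isPreconnected_sUnion x₀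
  · rintro S ⟨y, hy, rfl⟩; exact hx₀K y
  · rintro S ⟨y, hy, rfl⟩
    apply IsPreconnected.image isPreconnected_Icc
    have hwc : Continuous (fun t : ℝ => (1-t)•(x₀-p) + t•(y-p)) := by
      apply Continuous.add
      · exact (continuous_const.sub continuous_id).smul continuous_const
      · exact continuous_id.smul continuous_const
    have hnc : ContinuousOn (fun t : ℝ => ‖(1-t)•(x₀-p) + t•(y-p)‖⁻¹) (Icc 0 1) := by
      apply ContinuousOn.inv₀ hwc.norm.continuousOn
      intro t ht
      exact (hwpos y hy.1 hy.2 t ht).ne'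
    have : ContinuousOn (f y) (Icc 0 1) := by
      simp only [hf]
      exact continuousOn_const.add (hnc.smul hwc.continuousOn)
    exact this
end

section
/- The k-fold chromatic number of the odd cycle C_{2s+1} equals 2k + ⌈k/s⌉; that is, the minimum number of colors needed to assign to each vertex of a (2s+1)-cycle a set of k colors so that adjacent vertices receive disjoint color sets is 2k + ⌈k/s⌉. -/
def kcArc (n k p : ℕ) (hn : 0 < n) : Finset (Fin n) :=
  (Finset.range k).image fun j => ⟨(p + j) % n, Nat.mod_lt _ hn⟩

lemma kcArc_card (n k p : ℕ) (hn : 0 < n) (hkn : k ≤ n) :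
    (kcArc n k p hn).card = k := by
  rw [kcArc, Finset.card_image_of_injOn, Finset.card_range]
  intro j1 h1 j2 h2 h
  simp only [Finset.coe_range, Set.mem_Iio] at h1 h2
  have h' : (p + j1) % n = (p + j2) % n := congrArg Fin.val h
  have : j1 % n = j2 % n := Nat.ModEq.add_left_cancel' p h'
  rwa [Nat.mod_eq_of_lt (lt_of_lt_of_le h1 hkn),
    Nat.mod_eq_of_lt (lt_of_lt_of_le h2 hkn)] at this

lemma kcArc_disjoint (n k p q : ℕ) (hn : 0 < n) (h1 : p + k ≤ q) (h2 : q + k ≤ p + n) :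
    Disjoint (kcArc n k p hn) (kcArc n k q hn) := by
  rw [Finset.disjoint_left]
  rintro x hx hy
  simp only [kcArc, Finset.mem_image, Finset.mem_range] at hx hy
  obtain ⟨j, hj, hjx⟩ := hx
  obtain ⟨j', hj', hjy⟩ := hy
  have h' : (p + j) % n = (q + j') % n := by
    have := hjx.trans hjy.symm
    exact congrArg Fin.val this
  have hlt : p + j < q + j' := by omega
  have hdvd : n ∣ (q + j') - (p + j) := (Nat.modEq_iff_dvd' (le_of_lt hlt)).mp h'
  have := Nat.le_of_dvd (by omega) hdvd
  omega

lemma kcArc_congr (n k p q : ℕ) (hn : 0 < n) (h : p % n = q % n) :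
    kcArc n k p hn = kcArc n k q hn := by
  unfold kcArc
  apply Finset.image_congr
  intro j _
  exact Fin.ext (Nat.ModEq.add_right j h)

lemma kc_exists (s k : ℕ) (hs : 0 < s) (hk : 0 < k) :
    ∃ c : ZMod (2 * s + 1) → Finset (Fin (2 * k + (k + s - 1) / s)),
      (∀ v, (c v).card = k) ∧ ∀ v, Disjoint (c v) (c (v + 1)) := by
  set t := (k + s - 1) / s with htdef
  set n := 2 * k + t with hndef
  set N := 2 * s + 1 with hNdef
  have hN : 0 < N := by omega
  have ht : k ≤ s * t := by
    have h := Nat.div_add_mod (k + s - 1) s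
    have h2 : (k + s - 1) % s < s := Nat.mod_lt _ hs
    have h3 : k + s - 1 + 1 = k + s := by omega
    rw [← htdef] at h
    linarith
  have ht1 : 0 < t := Nat.div_pos (by omega) hs
  have hn : 0 < n := by omega
  have hkN : k * N ≤ n * s := by
    simp only [hndef, hNdef]; nlinarith
  have hub : n * s < (k + t) * N := by
    simp only [hndef, hNdef]; nlinarith
  set start : ℕ → ℕ := fun i => i * (n * s) / N with hstart
  have hklow : k ≤ (n * s) / N := (Nat.le_div_iff_mul_le hN).mpr hkN
  have hup : (n * s) / N < k + t := (Nat.div_lt_iff_lt_mul hN).mpr hub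
  have main : ∀ i, start i + k ≤ start (i + 1) ∧ start (i + 1) + k ≤ start i + n := by
    intro i
    have he : start (i + 1) = (i * (n * s) + n * s) / N := by
      simp only [hstart]; ring_nf
    constructor
    · have h4 := Nat.add_div_le_add_div (i * (n * s)) (n * s) N
      rw [he]
      simp only [hstart]
      omega
    · have hdiv := Nat.add_div (a := i * (n * s)) (b := n * s) hN
      rw [he, hdiv]
      simp only [hstart]
      split_ifs <;> omega
  haveI : NeZero N := ⟨by omega⟩
  have hval : ∀ v : ZMod N, (v + 1).val = (v.val + 1) % N := by
    intro v
    rw [ZMod.val_add, ZMod.val_one_eq_one_mod]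
    have : (1 : ℕ) % N = 1 := Nat.mod_eq_of_lt (by omega)
    rw [this]
  refine ⟨fun v => kcArc n k (start v.val) hn, fun v => kcArc_card n k _ hn (by omega), fun v => ?_⟩
  have hvlt : (v : ZMod N).val < N := ZMod.val_lt v
  rcases Nat.lt_or_ge (v.val + 1) N with hcase | hcase
  · have h1 : (v + 1).val = v.val + 1 := by rw [hval, Nat.mod_eq_of_lt hcase]
    show Disjoint (kcArc n k (start v.val) hn) (kcArc n k (start (v + 1).val) hn)
    rw [h1]
    exact kcArc_disjoint n k _ _ hn (main v.val).1 (main v.val).2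
  · have hv2s : v.val = 2 * s := by omega
    have h1 : (v + 1).val = 0 := by rw [hval, hv2s]; simp [hNdef]
    show Disjoint (kcArc n k (start v.val) hn) (kcArc n k (start (v + 1).val) hn)
    rw [h1, hv2s]
    have h0 : kcArc n k (start 0) hn = kcArc n k (start N) hn := by
      apply kcArc_congr
      have : start 0 = 0 := by simp [hstart]
      have h2 : start N = n * s := by
        simp only [hstart]; exact Nat.mul_div_cancel_left _ hN
      rw [this, h2, Nat.zero_mod, Nat.mul_mod_right]
    rw [h0]
    have := main (2 * s)
    exact kcArc_disjoint n k _ _ hn this.1 (by simpa [hNdef] using this.2)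

lemma kc_lb (s k n : ℕ) (hs : 0 < s) (hk : 0 < k)
    (c : ZMod (2 * s + 1) → Finset (Fin n)) (hcard : ∀ v, (c v).card = k)
    (hdisj : ∀ v, Disjoint (c v) (c (v + 1))) : 2 * k + (k + s - 1) / s ≤ n := by
  haveI : NeZero (2 * s + 1) := ⟨by omega⟩
  have hScard : ∀ a : Fin n,
      (Finset.univ.filter (fun v : ZMod (2 * s + 1) => a ∈ c v)).card ≤ s := by
    intro a
    set S := Finset.univ.filter (fun v : ZMod (2 * s + 1) => a ∈ c v) with hS
    have hd : Disjoint S (S.image (· + 1)) := by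
      rw [Finset.disjoint_left]
      intro v hv hv'
      obtain ⟨u, hu, huv⟩ := Finset.mem_image.mp hv'
      rw [Finset.mem_filter] at hv hu
      exact (Finset.disjoint_left.mp (hdisj u)) hu.2 (huv ▸ hv.2)
    have hc2 : (S.image (· + 1)).card = S.card :=
      Finset.card_image_of_injective _ (add_left_injective 1)
    have hun : (S ∪ S.image (· + 1)).card = S.card + S.card := by
      rw [Finset.card_union_of_disjoint hd, hc2]
    have hle : (S ∪ S.image (· + 1)).card ≤ 2 * s + 1 := by
      have := Finset.card_le_univ (S ∪ S.image (· + 1))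
      rwa [ZMod.card] at this
    omega
  have hsum : ∑ v : ZMod (2 * s + 1), (c v).card
      = ∑ a : Fin n, (Finset.univ.filter (fun v : ZMod (2 * s + 1) => a ∈ c v)).card := by
    simp only [Finset.card_filter]
    rw [Finset.sum_comm]
    congr 1
    ext v
    rw [← Finset.card_filter, Finset.filter_univ_mem]
  have h1 : (2 * s + 1) * k ≤ n * s := by
    have hL : ∑ v : ZMod (2 * s + 1), (c v).card = (2 * s + 1) * k := by
      simp only [hcard]
      rw [Finset.sum_const, Finset.card_univ, ZMod.card, smul_eq_mul]
    have hR : ∑ a : Fin n, (Finset.univ.filter (fun v : ZMod (2 * s + 1) => a ∈ c v)).card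
        ≤ n * s := by
      calc _ ≤ ∑ _a : Fin n, s := Finset.sum_le_sum fun a _ => hScard a
        _ = n * s := by rw [Finset.sum_const, Finset.card_univ, Fintype.card_fin, smul_eq_mul]
    omega
  have h2k : 2 * k ≤ n := by nlinarith
  obtain ⟨m, rfl⟩ := Nat.exists_eq_add_of_le h2k
  have hkm : k ≤ s * m := by nlinarith
  have hfin : (k + s - 1) / s ≤ m := by
    calc (k + s - 1) / s ≤ (s * m + (s - 1)) / s := Nat.div_le_div_right (by omega)
      _ = m + (s - 1) / s := by rw [Nat.mul_add_div hs]
      _ = m := by rw [Nat.div_eq_of_lt (by omega), Nat.add_zero]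
  omega

/-- The k-fold chromatic number of the odd cycle C_{2s+1} is 2k + ⌈k/s⌉. -/
theorem kfold_chromatic_odd_cycle (s k : ℕ) (hs : 0 < s) (hk : 0 < k) :
    IsLeast {n : ℕ | ∃ c : ZMod (2 * s + 1) → Finset (Fin n),
        (∀ v, (c v).card = k) ∧ ∀ v, Disjoint (c v) (c (v + 1))}
      (2 * k + (k + s - 1) / s) := by
  constructor
  · exact kc_exists s k hs hk
  · rintro n ⟨c, hcard, hdisj⟩
    exact kc_lb s k n hs hk c hcard hdisj
end
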